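/- arXiv:2109.02500 — 5 statements merged into one kernel-verified Lean document; each statement's English description precedes it below -/
import Mathlib

section
/- Let 0<q<1. For every n≥0 and every x∈ℂ, the q-Bernoulli polynomial β_n(x;q) has the expansion β_n(x;q) = Σ_{k=0}^{n} β_{n−k}(0;q) · (q^{k²/4}/(q;q)_k) · ρ_k(x), where β_m(0;q) are the q-Bernoulli numbers (the values of β_m(·;q) at 0). -/
open Complex Filter

noncomputable section

/-- finite q-Pochhammer `(a;q)_n` -/
def qp (q a : ℂ) (n : ℕ) : ℂ := ∏ j ∈ Finset.range n, (1 - a * q ^ j)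

/-- infinite q-Pochhammer `(a;q)_∞` -/
def qpInf (q a : ℂ) : ℂ := ∏' j : ℕ, (1 - a * q ^ j)

/-- the real power `q ^ t` viewed as a complex number -/
def qpow (q t : ℝ) : ℂ := ((q ^ t : ℝ) : ℂ)

/-- `ρ` is the family of polynomials `ρ_n` -/
def IsRho (q : ℝ) (ρ : ℕ → ℂ → ℂ) : Prop :=
  (∀ x : ℂ, ρ 0 x = 1) ∧
  ∀ n : ℕ, 1 ≤ n →
    (∃ P : Polynomial ℂ, P.natDegree = n ∧ ∀ x : ℂ, ρ n x = P.eval x) ∧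
    ∀ z : ℂ, z ≠ 0 →
      ρ n ((z + z⁻¹) / 2) =
        (1 + z ^ 2) * qp ((q : ℂ) ^ 2) (-((q : ℂ) ^ ((2 : ℤ) - (n : ℤ)) * z ^ 2)) (n - 1) *
          z ^ (-(n : ℤ))

/-- the q-exponential function `𝓔_q(x;w)` -/
def Eqf (q : ℝ) (ρ : ℕ → ℂ → ℂ) (x w : ℂ) : ℂ :=
  ∑' n : ℕ, (qpow q ((n : ℝ) ^ 2 / 4) / qp (q : ℂ) (q : ℂ) n) * ρ n x * w ^ n

/-- Suslov's q-Bernoulli polynomials `𝓑_n(x;q)` -/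
def IsBigB (q : ℝ) (ρ : ℕ → ℂ → ℂ) (B : ℕ → ℂ → ℂ) : Prop :=
  (∀ n : ℕ, ∃ P : Polynomial ℂ, P.natDegree = n ∧ ∀ x : ℂ, B n x = P.eval x) ∧
  ∀ x : ℂ, ∃ r : ℝ, 0 < r ∧ r ≤ 1 ∧ ∀ w : ℂ, ‖w‖ < r → ∃ S : ℂ,
    HasSum (fun n : ℕ => B n x * w ^ n) S ∧
    S * (qpInf (qpow q (1/2)) (-w) - qpInf (qpow q (1/2)) w) =
      w * qpInf ((q : ℂ) ^ 2) ((q : ℂ) * w ^ 2) * Eqf q ρ x w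

/-- the q-Bernoulli polynomials `β_n(x;q)` -/
def IsSmallB (q : ℝ) (ρ : ℕ → ℂ → ℂ) (B : ℕ → ℂ → ℂ) : Prop :=
  (∀ n : ℕ, ∃ P : Polynomial ℂ, P.natDegree = n ∧ ∀ x : ℂ, B n x = P.eval x) ∧
  ∀ x : ℂ, ∃ r : ℝ, 0 < r ∧ r ≤ 1 ∧ ∀ w : ℂ, ‖w‖ < r → ∃ S : ℂ,
    HasSum (fun n : ℕ => B n x * w ^ n) S ∧
    S * (qpInf (qpow q (1/2)) (-w) - qpInf (qpow q (1/2)) w) =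
      w * qpInf (qpow q (1/2)) w * Eqf q ρ x w

/-- the q-Euler polynomials `𝓔_n(x;q)` -/
def IsBigE (q : ℝ) (ρ : ℕ → ℂ → ℂ) (E : ℕ → ℂ → ℂ) : Prop :=
  (∀ n : ℕ, ∃ P : Polynomial ℂ, P.natDegree = n ∧ ∀ x : ℂ, E n x = P.eval x) ∧
  ∀ x : ℂ, ∃ r : ℝ, 0 < r ∧ r ≤ 1 ∧ ∀ w : ℂ, ‖w‖ < r → ∃ S : ℂ,
    HasSum (fun n : ℕ => E n x * w ^ n) S ∧
    S * (qpInf (qpow q (1/2)) (-w) + qpInf (qpow q (1/2)) w) =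
      qpInf ((q : ℂ) ^ 2) ((q : ℂ) * w ^ 2) * Eqf q ρ x w

/-- the q-Euler polynomials `Ẽ_n(x;q)` -/
def IsTildeE (q : ℝ) (ρ : ℕ → ℂ → ℂ) (E : ℕ → ℂ → ℂ) : Prop :=
  (∀ n : ℕ, ∃ P : Polynomial ℂ, P.natDegree = n ∧ ∀ x : ℂ, E n x = P.eval x) ∧
  ∀ x : ℂ, ∃ r : ℝ, 0 < r ∧ r ≤ 1 ∧ ∀ w : ℂ, ‖w‖ < r → ∃ S : ℂ,
    HasSum (fun n : ℕ => E n x * w ^ n) S ∧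
    S * (qpInf (qpow q (1/2)) (-w) + qpInf (qpow q (1/2)) w) =
      2 * qpInf (qpow q (1/2)) w * Eqf q ρ x w

/-- `g` is the Askey–Wilson derivative `𝓓_q f` -/
def AWEq (q : ℝ) (f g : ℂ → ℂ) : Prop :=
  ∀ z : ℂ, z ≠ 0 →
    g ((z + z⁻¹) / 2) =
      (f ((qpow q (1/2) * z + qpow q (-(1/2)) * z⁻¹) / 2) -
          f ((qpow q (-(1/2)) * z + qpow q (1/2) * z⁻¹) / 2)) /
        (((qpow q (1/2) - qpow q (-(1/2))) / 2) * (z - z⁻¹))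

/-- `Df` is the sequence of iterated Askey–Wilson derivatives of `f`, all entire -/
def IsAWIter (q : ℝ) (f : ℂ → ℂ) (Df : ℕ → ℂ → ℂ) : Prop :=
  Df 0 = f ∧ (∀ k : ℕ, Differentiable ℂ (Df k)) ∧ ∀ k : ℕ, AWEq q (Df k) (Df (k + 1))

/-- growth hypothesis: q-exponential growth of order less than `2 ln(1/q)`, or of
order `2 ln(1/q)` and type less than `2 ln 2 / ln(1/q)` -/
def Growth (q : ℝ) (f : ℂ → ℂ) : Prop :=
  (∃ K : ℝ, 0 < K ∧ ∃ α c : ℝ, 0 < c ∧ c < 1 ∧ ∀ x : ℂ, 1 ≤ ‖x‖ →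
      ‖f x‖ ≤ K * ‖x‖ ^ α * Real.exp (c * (Real.log ‖x‖) ^ 2 / Real.log (1 / q))) ∨
  (∃ K : ℝ, 0 < K ∧ ∃ α : ℝ, α < 2 * Real.log 2 / Real.log (1 / q) ∧ ∀ x : ℂ, 1 ≤ ‖x‖ →
      ‖f x‖ ≤ K * ‖x‖ ^ α * Real.exp ((Real.log ‖x‖) ^ 2 / Real.log (1 / q)))

/-- the basic sine at `η`: `S_q(η;w)` -/
def Seta (q : ℝ) (w : ℂ) : ℂ :=
  (qpInf (qpow q (1/2)) (-(I * w)) - qpInf (qpow q (1/2)) (I * w)) /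
    (2 * I * qpInf ((q : ℂ) ^ 2) (-((q : ℂ) * w ^ 2)))

/-- the basic cosine at `η`: `C_q(η;w)` -/
def Ceta (q : ℝ) (w : ℂ) : ℂ :=
  (qpInf (qpow q (1/2)) (-(I * w)) + qpInf (qpow q (1/2)) (I * w)) /
    (2 * qpInf ((q : ℂ) ^ 2) (-((q : ℂ) * w ^ 2)))

/-- `η = (q^{1/4} + q^{-1/4})/2` as a complex number -/
def etaC (q : ℝ) : ℂ := (qpow q (1/4) + qpow q (-(1/4))) / 2


lemma exp_le_one_sub {t : ℝ} (h0 : 0 ≤ t) (h1 : t < 1) :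
    Real.exp (-(t / (1 - t))) ≤ 1 - t := by
  have h1t : 0 < 1 - t := by linarith
  have h := Real.add_one_le_exp (t / (1 - t))
  have h2 : 1 / (1 - t) ≤ Real.exp (t / (1 - t)) := by
    have : t / (1 - t) + 1 = 1 / (1 - t) := by field_simp; ring
    linarith
  rw [Real.exp_neg]
  rw [inv_le_comm₀ (Real.exp_pos _) h1t]  -- maybe wrong name
  calc (1 - t)⁻¹ = 1 / (1 - t) := (one_div _).symm
    _ ≤ Real.exp (t / (1 - t)) := h2

lemma prod_one_sub_lb {s c : ℝ} (hs0 : 0 ≤ s) (hs1 : s < 1) (hc0 : 0 ≤ c) (hc1 : c < 1)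
    (F : Finset ℕ) :
    Real.exp (-(c / ((1 - c) * (1 - s)))) ≤ ∏ j ∈ F, (1 - c * s ^ j) := by
  have hc' : 0 < 1 - c := by linarith
  have hs' : 0 < 1 - s := by linarith
  have key : ∀ j ∈ F, Real.exp (-(c * s ^ j / (1 - c))) ≤ 1 - c * s ^ j := by
    intro j _
    have hsj : s ^ j ≤ 1 := pow_le_one₀ hs0 hs1.le
    have hsj0 : 0 ≤ s ^ j := pow_nonneg hs0 j
    have h0 : 0 ≤ c * s ^ j := mul_nonneg hc0 hsj0
    have h1 : c * s ^ j < 1 := lt_of_le_of_lt (by nlinarith) hc1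
    refine le_trans (Real.exp_le_exp.2 ?_) (exp_le_one_sub h0 h1)
    have : 0 < 1 - c * s ^ j := by linarith
    rw [neg_le_neg_iff]
    apply div_le_div_of_nonneg_left h0 hc'
    nlinarith
  calc Real.exp (-(c / ((1 - c) * (1 - s))))
      ≤ Real.exp (-(∑ j ∈ F, c * s ^ j / (1 - c))) := by
        apply Real.exp_le_exp.2
        rw [neg_le_neg_iff]
        rw [← Finset.sum_div]
        rw [div_le_div_iff₀ (by positivity) (by positivity)]
        have hsum : ∑ j ∈ F, s ^ j ≤ (1 - s)⁻¹ := by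
          have hgs : Summable (fun j : ℕ => s ^ j) := summable_geometric_of_lt_one hs0 hs1
          calc ∑ j ∈ F, s ^ j ≤ ∑' j : ℕ, s ^ j :=
                Summable.sum_le_tsum F (fun i _ => pow_nonneg hs0 i) hgs
            _ = (1 - s)⁻¹ := tsum_geometric_of_lt_one hs0 hs1
        calc (∑ j ∈ F, c * s ^ j) * ((1 - c) * (1 - s))
            = c * (∑ j ∈ F, s ^ j) * ((1 - c) * (1 - s)) := by rw [Finset.mul_sum]
          _ ≤ c * (1 - s)⁻¹ * ((1 - c) * (1 - s)) := by
              apply mul_le_mul_of_nonneg_right _ (by positivity)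
              exact mul_le_mul_of_nonneg_left hsum hc0
          _ = c * (1 - c) := by field_simp
    _ = ∏ j ∈ F, Real.exp (-(c * s ^ j / (1 - c))) := by
        rw [← Real.exp_sum, ← Finset.sum_neg_distrib]
    _ ≤ ∏ j ∈ F, (1 - c * s ^ j) := by
        apply Finset.prod_le_prod (fun j _ => (Real.exp_pos _).le) key

lemma qpInf_ne_zero {s : ℝ} (hs0 : 0 ≤ s) (hs1 : s < 1) {a : ℂ} (ha : ‖a‖ < 1) :
    qpInf (s : ℂ) a ≠ 0 := by
  unfold qpInf
  by_cases hM : Multipliable (fun j : ℕ => (1 - a * (s : ℂ) ^ j))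
  · have hP := hM.hasProd
    set P := ∏' j : ℕ, (1 - a * (s : ℂ) ^ j) with hPdef
    have hlb : ∀ F : Finset ℕ, Real.exp (-(‖a‖ / ((1 - ‖a‖) * (1 - s)))) ≤
        ‖∏ j ∈ F, (1 - a * (s : ℂ) ^ j)‖ := by
      intro F
      refine le_trans (prod_one_sub_lb hs0 hs1 (norm_nonneg a) ha F) ?_
      rw [norm_prod]
      apply Finset.prod_le_prod
      · intro j _
        have : ‖a * (s:ℂ)^j‖ ≤ ‖a‖ := by
          rw [norm_mul, norm_pow, Complex.norm_real, Real.norm_of_nonneg hs0]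
          calc ‖a‖ * s ^ j ≤ ‖a‖ * 1 := by
                exact mul_le_mul_of_nonneg_left (pow_le_one₀ hs0 hs1.le) (norm_nonneg a)
            _ = ‖a‖ := mul_one _
        nlinarith [pow_le_one₀ hs0 hs1.le (n := j), pow_nonneg hs0 j, norm_nonneg a]
      · intro j _
        calc 1 - ‖a‖ * s ^ j = 1 - ‖a * (s:ℂ)^j‖ := by
              rw [norm_mul, norm_pow, Complex.norm_real, Real.norm_of_nonneg hs0]
          _ ≤ ‖1 - a * (s:ℂ)^j‖ := by
              have := norm_sub_norm_le (1 : ℂ) (a * (s:ℂ)^j)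
              simpa using this
    have hnorm : Real.exp (-(‖a‖ / ((1 - ‖a‖) * (1 - s)))) ≤ ‖P‖ := by
      have htend : Tendsto (fun F : Finset ℕ => ∏ j ∈ F, ‖(1 - a * (s : ℂ) ^ j)‖)
          atTop (nhds ‖P‖) := hP.norm
      refine ge_of_tendsto' htend (fun F => ?_)
      rw [← norm_prod]
      exact hlb F
    intro h
    rw [h] at hnorm
    simp at hnorm
    exact absurd hnorm (not_le.2 (Real.exp_pos _))
  · rw [tprod_eq_one_of_not_multipliable hM]
    exact one_ne_zero

lemma qp_norm_lb {q : ℝ} (hq0 : 0 < q) (hq1 : q < 1) (n : ℕ) :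
    Real.exp (-(q / ((1 - q) * (1 - q)))) ≤ ‖qp (q : ℂ) (q : ℂ) n‖ := by
  unfold qp
  rw [norm_prod]
  refine le_trans (prod_one_sub_lb hq0.le hq1 hq0.le hq1 (Finset.range n)) ?_
  apply Finset.prod_le_prod
  · intro j _
    have h1 : q * q ^ j ≤ q := by nlinarith [pow_le_one₀ hq0.le hq1.le (n := j), pow_nonneg hq0.le j]
    nlinarith
  · intro j _
    have : ((1 : ℂ) - (q:ℂ) * (q:ℂ) ^ j) = ((1 - q * q ^ j : ℝ) : ℂ) := by push_cast; ring
    rw [this, Complex.norm_real]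
    exact le_abs_self _

lemma rho_at_zero {q : ℝ} {ρ : ℕ → ℂ → ℂ} (hρ : IsRho q ρ) {n : ℕ} (hn : 1 ≤ n) :
    ρ n 0 = 0 := by
  have h := (hρ.2 n hn).2 I I_ne_zero
  have hI : (I + I⁻¹) / 2 = 0 := by simp [Complex.inv_I]
  rw [hI] at h
  rw [h]
  simp [Complex.I_sq]

lemma Eqf_at_zero {q : ℝ} {ρ : ℕ → ℂ → ℂ} (hρ : IsRho q ρ) (w : ℂ) :
    Eqf q ρ 0 w = 1 := by
  unfold Eqf
  rw [tsum_eq_single 0]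
  · rw [hρ.1 0]
    simp [qpow, qp]
  · intro n hn
    rw [rho_at_zero hρ (Nat.one_le_iff_ne_zero.2 hn)]
    ring

/-- the integer sum `T n = ∑_{j<n-1} min (2 - n + 2j) 0` -/
def Tsum (n : ℕ) : ℤ := ∑ j ∈ Finset.range (n - 1), min ((2 : ℤ) - (n : ℤ) + 2 * (j : ℤ)) 0

lemma Tsum_step (n : ℕ) : Tsum (n + 2) = -(n : ℤ) + Tsum n := by
  unfold Tsum
  have h1 : (n + 2) - 1 = n + 1 := by omega
  rw [h1, Finset.sum_range_succ']
  have hcongr : ∀ j ∈ Finset.range n,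
      min ((2:ℤ) - ((n + 2 : ℕ) : ℤ) + 2 * ((j + 1 : ℕ) : ℤ)) 0
        = min ((2:ℤ) - (n : ℤ) + 2 * (j : ℤ)) 0 := by
    intro j _; push_cast; ring_nf
  rw [Finset.sum_congr rfl hcongr]
  have h0 : min ((2:ℤ) - ((n + 2 : ℕ) : ℤ) + 2 * ((0 : ℕ) : ℤ)) 0 = -(n:ℤ) := by
    push_cast; omega
  rw [h0]
  have htail : ∑ j ∈ Finset.range n, min ((2:ℤ) - (n : ℤ) + 2 * (j : ℤ)) 0
      = ∑ j ∈ Finset.range (n - 1), min ((2:ℤ) - (n : ℤ) + 2 * (j : ℤ)) 0 := by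
    match n with
    | 0 => rfl
    | (m + 1) =>
      have : (m + 1) - 1 = m := by omega
      rw [this, Finset.sum_range_succ]
      have : min ((2:ℤ) - ((m + 1 : ℕ) : ℤ) + 2 * (m : ℤ)) 0 = 0 := by push_cast; omega
      rw [this, add_zero]
  rw [htail]; ring

lemma Tsum_bound (n : ℕ) : -(4 * Tsum n) ≤ (n : ℤ) ^ 2 := by
  induction n using Nat.strong_induction_on with
  | _ n ih =>
    match n with
    | 0 => simp [Tsum]
    | 1 => simp [Tsum]
    | (m + 2) =>
      have h := Tsum_step m
      have hm := ih m (by omega)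
      rw [h]
      push_cast
      nlinarith

lemma exists_z (x : ℂ) : ∃ z : ℂ, z ≠ 0 ∧ 1 ≤ ‖z‖ ∧ (z + z⁻¹) / 2 = x := by
  obtain ⟨s, hs⟩ := IsAlgClosed.exists_pow_nat_eq (x ^ 2 - 1) (n := 2) (by norm_num)
  have hprod : (x + s) * (x - s) = 1 := by linear_combination -hs
  have h1 : (x + s) ≠ 0 := fun h => by simp [h] at hprod
  have h2 : (x - s) ≠ 0 := fun h => by simp [h] at hprod
  have hinv1 : (x + s)⁻¹ = x - s := (eq_inv_of_mul_eq_one_right hprod).symm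
  have hinv2 : (x - s)⁻¹ = x + s :=
    (eq_inv_of_mul_eq_one_right (by linear_combination hprod)).symm
  by_cases hn : 1 ≤ ‖x + s‖
  · exact ⟨x + s, h1, hn, by rw [hinv1]; ring⟩
  · refine ⟨x - s, h2, ?_, by rw [hinv2]; ring⟩
    have hnorm : ‖x + s‖ * ‖x - s‖ = 1 := by rw [← norm_mul, hprod, norm_one]
    push_neg at hn
    by_contra hc
    push_neg at hc
    nlinarith [norm_nonneg (x + s), norm_nonneg (x - s)]

lemma prod_zpow_eq {q : ℝ} (hq : q ≠ 0) (F : Finset ℕ) (f : ℕ → ℤ) :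
    ∏ j ∈ F, q ^ f j = q ^ (∑ j ∈ F, f j) := by
  induction F using Finset.cons_induction with
  | empty => simp
  | cons a s ha ih => rw [Finset.prod_cons, Finset.sum_cons, ih, zpow_add₀ hq]

lemma rho_growth {q : ℝ} (hq0 : 0 < q) (hq1 : q < 1) {ρ : ℕ → ℂ → ℂ} (hρ : IsRho q ρ)
    (x : ℂ) : ∃ t : ℝ, 0 ≤ t ∧ ∀ n : ℕ, ‖ρ n x‖ ≤ (1 + t) ^ n * q ^ (-((n : ℝ) ^ 2) / 4) := by
  obtain ⟨z, hz0, hz1, hzx⟩ := exists_z x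
  refine ⟨‖z‖ ^ 2, by positivity, fun n => ?_⟩
  set t : ℝ := ‖z‖ ^ 2 with ht
  have ht1 : 1 ≤ t := by nlinarith
  rcases Nat.eq_zero_or_pos n with hn | hn
  · subst hn
    rw [hρ.1 x]
    simp
  -- n ≥ 1
  have hrho : ρ n x = (1 + z ^ 2) *
      qp ((q : ℂ) ^ 2) (-((q : ℂ) ^ ((2 : ℤ) - (n : ℤ)) * z ^ 2)) (n - 1) * z ^ (-(n : ℤ)) := by
    rw [← hzx]; exact (hρ.2 n hn).2 z hz0
  rw [hrho]
  have hq0' : (0:ℝ) < 1 - 0 := by norm_num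
  -- norm of the last factor
  have hzpow : ‖z ^ (-(n : ℤ))‖ ≤ 1 := by
    rw [norm_zpow, zpow_neg, zpow_natCast]
    exact inv_le_one_of_one_le₀ (one_le_pow₀ hz1)
  -- norm of the middle factor
  have hmid : ‖qp ((q : ℂ) ^ 2) (-((q : ℂ) ^ ((2 : ℤ) - (n : ℤ)) * z ^ 2)) (n - 1)‖ ≤
      (1 + t) ^ (n - 1) * q ^ (Tsum n) := by
    unfold qp
    rw [norm_prod]
    have hfac : ∀ j ∈ Finset.range (n - 1),
        ‖(1 : ℂ) - -((q : ℂ) ^ ((2 : ℤ) - (n : ℤ)) * z ^ 2) * ((q : ℂ) ^ 2) ^ j‖ ≤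
          q ^ (min ((2 : ℤ) - (n : ℤ) + 2 * (j : ℤ)) 0) * (1 + t) := by
      intro j _
      have hre : (1 : ℂ) - -((q : ℂ) ^ ((2 : ℤ) - (n : ℤ)) * z ^ 2) * ((q : ℂ) ^ 2) ^ j =
          1 + ((q : ℂ) ^ ((2 : ℤ) - (n : ℤ) + 2 * (j : ℤ))) * z ^ 2 := by
        rw [zpow_add₀ (by exact_mod_cast hq0.ne')]
        push_cast
        ring_nf
        norm_cast
      rw [hre]
      have hnorm1 : ‖(1 : ℂ) + ((q : ℂ) ^ ((2 : ℤ) - (n : ℤ) + 2 * (j : ℤ))) * z ^ 2‖ ≤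
          1 + q ^ ((2 : ℤ) - (n : ℤ) + 2 * (j : ℤ)) * t := by
        refine le_trans (norm_add_le _ _) ?_
        rw [norm_one, norm_mul, norm_pow]
        have : ‖(q : ℂ) ^ ((2 : ℤ) - (n : ℤ) + 2 * (j : ℤ))‖ =
            q ^ ((2 : ℤ) - (n : ℤ) + 2 * (j : ℤ)) := by
          rw [norm_zpow, Complex.norm_real, Real.norm_of_nonneg hq0.le]
        rw [this]
      refine le_trans hnorm1 ?_
      set e : ℤ := (2 : ℤ) - (n : ℤ) + 2 * (j : ℤ) with he
      rcases le_or_gt 0 e with hee | hee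
      · rw [min_eq_right hee, zpow_zero, one_mul]
        have : q ^ e ≤ 1 := zpow_le_one₀ hq0 hq1.le hee
        nlinarith [zpow_pos hq0 e]
      · rw [min_eq_left hee.le]
        have h1 : (1:ℝ) ≤ q ^ e := one_le_zpow_of_nonpos₀ hq0 hq1.le hee.le
        nlinarith [zpow_pos hq0 e]
    refine le_trans (Finset.prod_le_prod (fun j _ => norm_nonneg _) hfac) ?_
    rw [Finset.prod_mul_distrib, Finset.prod_const, prod_zpow_eq hq0.ne']
    rw [Finset.card_range]
    rw [mul_comm]
    rfl
  have h1z : ‖(1 : ℂ) + z ^ 2‖ ≤ 1 + t := by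
    refine le_trans (norm_add_le _ _) ?_
    rw [norm_one, norm_pow]
  have hT : q ^ (Tsum n) ≤ q ^ (-((n : ℝ) ^ 2) / 4) := by
    rw [← Real.rpow_intCast q (Tsum n)]
    apply Real.rpow_le_rpow_of_exponent_ge hq0 hq1.le
    have := Tsum_bound n
    have h4 : (0:ℝ) < 4 := by norm_num
    rw [div_le_iff₀ h4]
    have h' : -(4 * ((Tsum n : ℝ))) ≤ ((n:ℝ)) ^ 2 := by exact_mod_cast this
    linarith
  have hTpos : (0:ℝ) ≤ q ^ (Tsum n) := (zpow_pos hq0 _).le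
  have h1tpos : (0:ℝ) ≤ 1 + t := by linarith
  calc ‖(1 + z ^ 2) * qp ((q : ℂ) ^ 2) (-((q : ℂ) ^ ((2 : ℤ) - (n : ℤ)) * z ^ 2)) (n - 1) *
        z ^ (-(n : ℤ))‖
      = ‖(1 : ℂ) + z ^ 2‖ * ‖qp ((q : ℂ) ^ 2) (-((q : ℂ) ^ ((2 : ℤ) - (n : ℤ)) * z ^ 2)) (n - 1)‖ *
          ‖z ^ (-(n : ℤ))‖ := by rw [norm_mul, norm_mul]
    _ ≤ (1 + t) * ((1 + t) ^ (n - 1) * q ^ (Tsum n)) * 1 := by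
        apply mul_le_mul _ hzpow (norm_nonneg _) (by positivity)
        exact mul_le_mul h1z hmid (norm_nonneg _) h1tpos
    _ = (1 + t) ^ n * q ^ (Tsum n) := by
        rw [mul_one, ← mul_assoc, ← pow_succ']
        congr 2
        omega
    _ ≤ (1 + t) ^ n * q ^ (-((n : ℝ) ^ 2) / 4) := by
        apply mul_le_mul_of_nonneg_left hT (by positivity)

lemma Eqf_norm_summable {q : ℝ} (hq0 : 0 < q) (hq1 : q < 1) {ρ : ℕ → ℂ → ℂ}
    (hρ : IsRho q ρ) (x : ℂ) :
    ∃ R : ℝ, 0 < R ∧ ∀ w : ℂ, ‖w‖ < R →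
      Summable (fun n : ℕ => ‖(qpow q ((n : ℝ) ^ 2 / 4) / qp (q : ℂ) (q : ℂ) n) * ρ n x * w ^ n‖) := by
  obtain ⟨t, ht0, hbound⟩ := rho_growth hq0 hq1 hρ x
  set E : ℝ := Real.exp (-(q / ((1 - q) * (1 - q)))) with hE
  have hEpos : 0 < E := Real.exp_pos _
  have h1t : (0:ℝ) < 1 + t := by linarith
  refine ⟨(1 + t)⁻¹, by positivity, fun w hw => ?_⟩
  have hwt : (1 + t) * ‖w‖ < 1 := by
    have h2 := mul_lt_mul_of_pos_left hw h1t
    rwa [mul_inv_cancel₀ h1t.ne'] at h2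
  have hterm : ∀ n : ℕ,
      ‖(qpow q ((n : ℝ) ^ 2 / 4) / qp (q : ℂ) (q : ℂ) n) * ρ n x * w ^ n‖ ≤
        E⁻¹ * ((1 + t) * ‖w‖) ^ n := by
    intro n
    rw [norm_mul, norm_mul, norm_div, norm_pow]
    have hqpow : ‖qpow q ((n : ℝ) ^ 2 / 4)‖ = q ^ ((n : ℝ) ^ 2 / 4) := by
      rw [qpow, Complex.norm_real, Real.norm_of_nonneg (Real.rpow_nonneg hq0.le _)]
    have hqp := qp_norm_lb hq0 hq1 n
    have hdiv : ‖qpow q ((n : ℝ) ^ 2 / 4)‖ / ‖qp (q : ℂ) (q : ℂ) n‖ ≤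
        q ^ ((n : ℝ) ^ 2 / 4) * E⁻¹ := by
      rw [hqpow, div_eq_mul_inv]
      apply mul_le_mul_of_nonneg_left _ (Real.rpow_nonneg hq0.le _)
      exact inv_anti₀ hEpos hqp
    calc ‖qpow q ((n : ℝ) ^ 2 / 4)‖ / ‖qp (q : ℂ) (q : ℂ) n‖ * ‖ρ n x‖ * ‖w‖ ^ n
        ≤ (q ^ ((n : ℝ) ^ 2 / 4) * E⁻¹) * ((1 + t) ^ n * q ^ (-((n : ℝ) ^ 2) / 4)) * ‖w‖ ^ n := by
          apply mul_le_mul_of_nonneg_right _ (by positivity)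
          apply mul_le_mul hdiv (hbound n) (norm_nonneg _) (by positivity)
      _ = E⁻¹ * ((1 + t) * ‖w‖) ^ n *
            (q ^ ((n : ℝ) ^ 2 / 4) * q ^ (-((n : ℝ) ^ 2) / 4)) := by rw [mul_pow]; ring
      _ = E⁻¹ * ((1 + t) * ‖w‖) ^ n := by
          rw [← Real.rpow_add hq0,
            show ((n : ℝ) ^ 2 / 4 + -((n : ℝ) ^ 2) / 4) = 0 by ring, Real.rpow_zero, mul_one]
  apply Summable.of_nonneg_of_le (fun n => norm_nonneg _) hterm
  apply Summable.mul_left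
  exact summable_geometric_of_lt_one (by positivity) hwt

lemma coeff_unique {d : ℕ → ℂ} {r : ℝ} (hr : 0 < r)
    (h : ∀ w : ℂ, 0 < ‖w‖ → ‖w‖ < r →
      Summable (fun n : ℕ => d n * w ^ n) ∧ ∑' n : ℕ, d n * w ^ n = 0) :
    ∀ m : ℕ, d m = 0 := by
  -- boundedness of coefficients at radius r/2
  have hw₀ : ‖((r / 2 : ℝ) : ℂ)‖ = r / 2 := by
    rw [Complex.norm_real, Real.norm_of_nonneg (by linarith)]
  have hsum₀ : Summable (fun n : ℕ => d n * ((r / 2 : ℝ) : ℂ) ^ n) :=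
    (h _ (by rw [hw₀]; linarith) (by rw [hw₀]; linarith)).1
  have htend : Filter.Tendsto (fun n : ℕ => ‖d n * ((r / 2 : ℝ) : ℂ) ^ n‖) atTop (nhds 0) := by
    rw [← norm_zero (E := ℂ)]
    exact (hsum₀.tendsto_atTop_zero).norm
  obtain ⟨M, hM⟩ := htend.bddAbove_range
  have hMb : ∀ n : ℕ, ‖d n‖ ≤ M * (2 / r) ^ n := by
    intro n
    have h1 : ‖d n * ((r / 2 : ℝ) : ℂ) ^ n‖ ≤ M := hM (Set.mem_range_self n)
    rw [norm_mul, norm_pow, hw₀] at h1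
    have h2 : (0:ℝ) < (r / 2) ^ n := by positivity
    rw [← le_div_iff₀ h2] at h1
    calc ‖d n‖ ≤ M / (r / 2) ^ n := h1
      _ = M * (2 / r) ^ n := by rw [div_eq_mul_inv, ← inv_pow, inv_div]
  have hM0 : 0 ≤ M := le_trans (norm_nonneg _) (hM (Set.mem_range_self 0))
  intro m
  induction m using Nat.strong_induction_on with
  | _ m ih =>
    -- key estimate
    have key : ∀ w : ℂ, 0 < ‖w‖ → ‖w‖ < r / 4 →
        ‖d m‖ ≤ 2 * M * (2 / r) ^ (m + 1) * ‖w‖ := by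
      intro w hw0 hw4
      obtain ⟨hsum, htsum⟩ := h w hw0 (by linarith)
      set u : ℝ := 2 / r * ‖w‖ with hu
      have hu0 : 0 ≤ u := by positivity
      have hu2 : u < 1 / 2 := by
        rw [hu, div_mul_eq_mul_div, div_lt_div_iff₀ hr (by norm_num)]
        linarith
      -- split the sum
      have hsplit := hsum.sum_add_tsum_nat_add (m + 1)
      have hfront : ∑ i ∈ Finset.range (m + 1), d i * w ^ i = d m * w ^ m := by
        rw [Finset.sum_eq_single_of_mem m (Finset.self_mem_range_succ m)]
        intro i hi hne
        have hi' := Finset.mem_range.mp hi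
        rw [ih i (by omega : i < m)]
        ring
      have htail : d m * w ^ m = -∑' k : ℕ, d (k + (m + 1)) * w ^ (k + (m + 1)) := by
        have h0 : d m * w ^ m + ∑' k : ℕ, d (k + (m + 1)) * w ^ (k + (m + 1)) = 0 := by
          rw [← hfront, hsplit, htsum]
        linear_combination h0
      -- geometric bound on the tail
      have hgeo : Summable (fun k : ℕ => M * (2 / r) ^ (k + (m + 1)) * ‖w‖ ^ (k + (m + 1))) := by
        have : ∀ k : ℕ, M * (2 / r) ^ (k + (m + 1)) * ‖w‖ ^ (k + (m + 1))
            = (M * u ^ (m + 1)) * u ^ k := by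
          intro k
          rw [hu, mul_pow, mul_pow]
          ring
        simp_rw [this]
        exact (summable_geometric_of_lt_one hu0 (by linarith)).mul_left _
      have htn : Summable (fun k : ℕ => ‖d (k + (m + 1)) * w ^ (k + (m + 1))‖) := by
        apply Summable.of_nonneg_of_le (fun k => norm_nonneg _) _ hgeo
        intro k
        rw [norm_mul, norm_pow]
        exact mul_le_mul_of_nonneg_right (hMb _) (by positivity)
      have hbound : ‖d m‖ * ‖w‖ ^ m ≤ M * u ^ (m + 1) * (1 - u)⁻¹ := by
        calc ‖d m‖ * ‖w‖ ^ m = ‖d m * w ^ m‖ := by rw [norm_mul, norm_pow]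
          _ = ‖∑' k : ℕ, d (k + (m + 1)) * w ^ (k + (m + 1))‖ := by rw [htail, norm_neg]
          _ ≤ ∑' k : ℕ, ‖d (k + (m + 1)) * w ^ (k + (m + 1))‖ := norm_tsum_le_tsum_norm htn
          _ ≤ ∑' k : ℕ, M * (2 / r) ^ (k + (m + 1)) * ‖w‖ ^ (k + (m + 1)) := by
              apply Summable.tsum_le_tsum _ htn hgeo
              intro k
              rw [norm_mul, norm_pow]
              exact mul_le_mul_of_nonneg_right (hMb _) (by positivity)
          _ = ∑' k : ℕ, (M * u ^ (m + 1)) * u ^ k := by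
              congr 1
              funext k
              rw [hu, mul_pow, mul_pow]
              ring
          _ = M * u ^ (m + 1) * (1 - u)⁻¹ := by
              rw [tsum_mul_left, tsum_geometric_of_lt_one hu0 (by linarith)]
      have hinv : (1 - u)⁻¹ ≤ 2 := by
        rw [inv_le_comm₀ (by linarith) (by norm_num)]
        linarith
      have h2 : ‖d m‖ * ‖w‖ ^ m ≤ 2 * M * (2 / r) ^ (m + 1) * ‖w‖ ^ (m + 1) := by
        calc ‖d m‖ * ‖w‖ ^ m ≤ M * u ^ (m + 1) * (1 - u)⁻¹ := hbound
          _ ≤ M * u ^ (m + 1) * 2 :=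
              mul_le_mul_of_nonneg_left hinv (by positivity)
          _ = 2 * M * (2 / r) ^ (m + 1) * ‖w‖ ^ (m + 1) := by
              rw [hu, mul_pow]
              ring
      have hwm : (0:ℝ) < ‖w‖ ^ m := by positivity
      have h2' : ‖d m‖ * ‖w‖ ^ m ≤ (2 * M * (2 / r) ^ (m + 1) * ‖w‖) * ‖w‖ ^ m := by
        calc ‖d m‖ * ‖w‖ ^ m ≤ 2 * M * (2 / r) ^ (m + 1) * ‖w‖ ^ (m + 1) := h2
          _ = (2 * M * (2 / r) ^ (m + 1) * ‖w‖) * ‖w‖ ^ m := by rw [pow_succ]; ring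
      exact le_of_mul_le_mul_right h2' hwm
    -- conclude d m = 0
    by_contra hdm
    have hdm' : 0 < ‖d m‖ := norm_pos_iff.mpr hdm
    set K : ℝ := 2 * M * (2 / r) ^ (m + 1) with hK
    have hK0 : 0 ≤ K := by positivity
    set ε : ℝ := min (r / 8) (‖d m‖ / (2 * K + 1)) with hε
    have hε0 : 0 < ε := by
      apply lt_min (by linarith)
      positivity
    have hεnorm : ‖((ε : ℝ) : ℂ)‖ = ε := by
      rw [Complex.norm_real, Real.norm_of_nonneg hε0.le]
    have h3 := key ((ε : ℝ) : ℂ) (by rw [hεnorm]; exact hε0) (by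
      rw [hεnorm]
      calc ε ≤ r / 8 := min_le_left _ _
        _ < r / 4 := by linarith)
    rw [hεnorm] at h3
    have h4 : ε ≤ ‖d m‖ / (2 * K + 1) := min_le_right _ _
    have h5 : K * ε ≤ K * (‖d m‖ / (2 * K + 1)) := mul_le_mul_of_nonneg_left h4 hK0
    have h6 : K * (‖d m‖ / (2 * K + 1)) < ‖d m‖ := by
      calc K * (‖d m‖ / (2 * K + 1)) = ‖d m‖ * (K / (2 * K + 1)) := by ring
        _ < ‖d m‖ * 1 := by
            apply mul_lt_mul_of_pos_left _ hdm'
            rw [div_lt_one (by positivity)]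
            linarith
        _ = ‖d m‖ := mul_one _
    linarith [h3, h5, h6]


/-- Expansion of the q-Bernoulli polynomial `β_n(x;q)` in the
basis `ρ_k` with coefficients given by the q-Bernoulli numbers `β_m(0;q)`. -/
theorem qBernoulli_rho_expansion (q : ℝ) (hq0 : 0 < q) (hq1 : q < 1)
    (ρ : ℕ → ℂ → ℂ) (hρ : IsRho q ρ)
    (β : ℕ → ℂ → ℂ) (hβ : IsSmallB q ρ β) :
    ∀ (n : ℕ) (x : ℂ),
      β n x = ∑ k ∈ Finset.range (n + 1),
        β (n - k) 0 * (qpow q ((k : ℝ) ^ 2 / 4) / qp (q : ℂ) (q : ℂ) k) * ρ k x := by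
  intro n x
  obtain ⟨rx, hrx0, hrx1, Hx⟩ := hβ.2 x
  obtain ⟨r0, hr00, hr01, H0⟩ := hβ.2 0
  obtain ⟨R, hR0, hEsum⟩ := Eqf_norm_summable hq0 hq1 hρ x
  set b : ℕ → ℂ := fun n => ∑ k ∈ Finset.range (n + 1),
    β (n - k) 0 * (qpow q ((k : ℝ) ^ 2 / 4) / qp (q : ℂ) (q : ℂ) k) * ρ k x with hb
  set d : ℕ → ℂ := fun n => β n x - b n with hd
  set r : ℝ := min (min rx r0) R with hrdef
  have hr : 0 < r := lt_min (lt_min hrx0 hr00) hR0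
  have hkey : ∀ w : ℂ, 0 < ‖w‖ → ‖w‖ < r →
      Summable (fun n : ℕ => d n * w ^ n) ∧ ∑' n : ℕ, d n * w ^ n = 0 := by
    intro w hw0 hwr
    have hwx : ‖w‖ < rx := lt_of_lt_of_le hwr (le_trans (min_le_left _ _) (min_le_left _ _))
    have hw0' : ‖w‖ < r0 := lt_of_lt_of_le hwr (le_trans (min_le_left _ _) (min_le_right _ _))
    have hwR : ‖w‖ < R := lt_of_lt_of_le hwr (min_le_right _ _)
    have hw1 : ‖w‖ < 1 := lt_of_lt_of_le hwx hrx1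
    obtain ⟨Sx, hSx, eqx⟩ := Hx w hwx
    obtain ⟨S0, hS0, eq0⟩ := H0 w hw0'
    rw [Eqf_at_zero hρ w, mul_one] at eq0
    -- the infinite product is nonzero
    have hs0 : (0:ℝ) ≤ q ^ ((1:ℝ)/2) := (Real.rpow_pos_of_pos hq0 _).le
    have hs1 : q ^ ((1:ℝ)/2) < 1 := Real.rpow_lt_one hq0.le hq1 (by norm_num)
    have hA : qpInf (qpow q (1/2)) w ≠ 0 := by
      rw [qpow]
      exact qpInf_ne_zero hs0 hs1 hw1
    have hwne : w ≠ 0 := by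
      intro hww; rw [hww] at hw0; simp at hw0
    have hD : qpInf (qpow q (1/2)) (-w) - qpInf (qpow q (1/2)) w ≠ 0 := by
      intro hDD
      rw [hDD, mul_zero] at eq0
      exact (mul_ne_zero hwne hA) eq0.symm
    have hSxeq : Sx = S0 * Eqf q ρ x w := by
      apply mul_right_cancel₀ hD
      rw [eqx]
      linear_combination (-(Eqf q ρ x w)) * eq0
    -- Cauchy product
    set f : ℕ → ℂ := fun k => (qpow q ((k : ℝ) ^ 2 / 4) / qp (q : ℂ) (q : ℂ) k) * ρ k x * w ^ k
      with hf
    set g : ℕ → ℂ := fun m => β m 0 * w ^ m with hg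
    have hfs : Summable (fun k : ℕ => ‖f k‖) := hEsum w hwR
    have hgs : Summable (fun m : ℕ => ‖g m‖) := summable_norm_iff.mpr hS0.summable
    have hinner : ∀ k ∈ Finset.range (n + 1), True := fun _ _ => trivial
    have hcoeff : ∀ m : ℕ, (∑ k ∈ Finset.range (m + 1), f k * g (m - k)) = b m * w ^ m := by
      intro m
      rw [hb, Finset.sum_mul]
      apply Finset.sum_congr rfl
      intro k hk
      have hk' : k ≤ m := by
        have := Finset.mem_range.mp hk; omega
      rw [hf, hg]
      have : w ^ k * w ^ (m - k) = w ^ m := by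
        rw [← pow_add]
        congr 1
        omega
      calc (qpow q ((k : ℝ) ^ 2 / 4) / qp (q : ℂ) (q : ℂ) k) * ρ k x * w ^ k *
            (β (m - k) 0 * w ^ (m - k))
          = β (m - k) 0 * (qpow q ((k : ℝ) ^ 2 / 4) / qp (q : ℂ) (q : ℂ) k) * ρ k x *
              (w ^ k * w ^ (m - k)) := by ring
        _ = β (m - k) 0 * (qpow q ((k : ℝ) ^ 2 / 4) / qp (q : ℂ) (q : ℂ) k) * ρ k x * w ^ m := by
            rw [this]
    have hbsum : Summable (fun m : ℕ => b m * w ^ m) := by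
      have h1 := (summable_norm_sum_mul_range_of_summable_norm hfs hgs).of_norm
      apply h1.congr
      intro m
      exact hcoeff m
    have hbtsum : ∑' m : ℕ, b m * w ^ m = Sx := by
      have h1 := tsum_mul_tsum_eq_tsum_sum_range_of_summable_norm hfs hgs
      have h2 : (∑' k : ℕ, f k) = Eqf q ρ x w := rfl
      have h3 : (∑' m : ℕ, g m) = S0 := hS0.tsum_eq
      calc ∑' m : ℕ, b m * w ^ m = ∑' m : ℕ, ∑ k ∈ Finset.range (m + 1), f k * g (m - k) := by
            apply tsum_congr
            intro m
            exact (hcoeff m).symm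
        _ = (∑' k : ℕ, f k) * ∑' m : ℕ, g m := h1.symm
        _ = Eqf q ρ x w * S0 := by rw [h2, h3]
        _ = Sx := by rw [hSxeq]; ring
    constructor
    · apply Summable.congr (hSx.summable.sub hbsum)
      intro m
      rw [hd]
      ring
    · have : ∑' m : ℕ, d m * w ^ m = ∑' m : ℕ, (β m x * w ^ m - b m * w ^ m) := by
        apply tsum_congr
        intro m
        rw [hd]
        ring
      rw [this, Summable.tsum_sub hSx.summable hbsum, hSx.tsum_eq, hbtsum, sub_self]
  have := coeff_unique hr hkey n
  rw [hd] at this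
  have := sub_eq_zero.mp this
  exact this

end
end

section
/- Let 0<q<1. For every n≥0, the q-Bernoulli numbers β_n(q²) to base q² and the Ismail–Mansour q-Bernoulli numbers B_n(q) are related by β_n(q²) = B_n(q) · 2^{n−1}(1−q)/(q;q)_n. -/
open Complex Filter

noncomputable section

/-- the q-factorial `[n]_q! = (q;q)_n / (1-q)^n` -/
def qfact (q : ℂ) (n : ℕ) : ℂ := qp q q n / (1 - q) ^ n


open scoped Topology

private lemma auxSummableLog (q : ℝ) (hq0 : 0 < q) (hq1 : q < 1) (w : ℂ) (hw : ‖w‖ ≤ 1/2) :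
    Summable fun j : ℕ => Complex.log (1 - w * (q:ℂ)^j) := by
  have hqj : ∀ j : ℕ, ‖w * (q:ℂ)^j‖ ≤ (1/2) * q ^ j := by
    intro j
    rw [norm_mul, norm_pow, Complex.norm_real, Real.norm_eq_abs, abs_of_pos hq0]
    exact mul_le_mul_of_nonneg_right hw (pow_nonneg hq0.le j)
  have hpow1 : ∀ j : ℕ, q ^ j ≤ 1 := fun j => pow_le_one₀ hq0.le hq1.le
  apply Summable.of_norm_bounded (g := fun j => 3/2 * ((1/2) * q ^ j))
    (((summable_geometric_of_lt_one hq0.le hq1).mul_left _).mul_left _)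
  intro j
  have h2 : ‖-(w * (q:ℂ)^j)‖ ≤ 1/2 := by
    rw [norm_neg]; exact (hqj j).trans (by nlinarith [hpow1 j])
  have hb := Complex.norm_log_one_add_half_le_self h2
  rw [← sub_eq_add_neg] at hb
  refine hb.trans ?_
  rw [norm_neg]
  nlinarith [hqj j]

private lemma auxQpInfExp (q : ℝ) (hq0 : 0 < q) (hq1 : q < 1) (w : ℂ) (hw : ‖w‖ ≤ 1/2) :
    qpInf (q:ℂ) w = Complex.exp (∑' j : ℕ, Complex.log (1 - w * (q:ℂ)^j)) := by
  have hfn : ∀ (_ : Unit) (j : ℕ), (1 : ℂ) - w * (q:ℂ)^j ≠ 0 := by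
    intro _ j
    rw [sub_ne_zero]
    intro h
    have h1 : ‖w * (q:ℂ)^j‖ ≤ 1/2 := by
      rw [norm_mul, norm_pow, Complex.norm_real, Real.norm_eq_abs, abs_of_pos hq0]
      calc ‖w‖ * q ^ j ≤ (1/2) * 1 := by
            have := pow_le_one₀ hq0.le hq1.le (n := j)
            have h0 : (0:ℝ) ≤ ‖w‖ := norm_nonneg w
            nlinarith
        _ = 1/2 := by norm_num
    rw [← h] at h1
    norm_num at h1
  have := Complex.cexp_tsum_eq_tprod (f := fun (j : ℕ) => (1:ℂ) - w * (q:ℂ)^j)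
    (hfn ()) (auxSummableLog q hq0 hq1 w hw)
  exact this.symm

private lemma auxQpInfNe (q : ℝ) (hq0 : 0 < q) (hq1 : q < 1) (w : ℂ) (hw : ‖w‖ ≤ 1/2) :
    qpInf (q:ℂ) w ≠ 0 := by
  rw [auxQpInfExp q hq0 hq1 w hw]; exact Complex.exp_ne_zero _

private lemma auxQpNe (q : ℝ) (hq0 : 0 < q) (hq1 : q < 1) (n : ℕ) :
    qp (q:ℂ) (q:ℂ) n ≠ 0 := by
  unfold qp
  refine Finset.prod_ne_zero_iff.mpr fun j _ => ?_
  have h : (q:ℂ) * (q:ℂ)^j = ((q^(j+1):ℝ):ℂ) := by push_cast; ring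
  rw [h, sub_ne_zero]
  intro he
  have h1 : (1:ℝ) = q^(j+1) := by exact_mod_cast he
  have h2 : q^(j+1) < 1 := pow_lt_one₀ hq0.le hq1 (Nat.succ_ne_zero j)
  linarith

private lemma auxDne (q : ℝ) (hq0 : 0 < q) (hq1 : q < 1) (t : ℝ) (ht0 : 0 < t) (ht : t ≤ 1/2) :
    qpInf (q:ℂ) (-(t:ℂ)) - qpInf (q:ℂ) (t:ℂ) ≠ 0 := by
  have hqp : ∀ j : ℕ, 0 < q ^ j := fun j => pow_pos hq0 j
  have hlt : ∀ j : ℕ, t * q ^ j ≤ 1/2 := by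
    intro j
    have h1 : q ^ j ≤ 1 := pow_le_one₀ hq0.le hq1.le
    nlinarith
  have htpos : ∀ j : ℕ, 0 < t * q ^ j := fun j => mul_pos ht0 (hqp j)
  have hnt : ‖(-(t:ℂ))‖ ≤ 1/2 := by
    rw [norm_neg, Complex.norm_real, Real.norm_eq_abs, abs_of_pos ht0]; exact ht
  have hpt : ‖((t:ℝ):ℂ)‖ ≤ 1/2 := by
    rw [Complex.norm_real, Real.norm_eq_abs, abs_of_pos ht0]; exact ht
  have hplusterm : ∀ j : ℕ, Complex.log (1 - (-(t:ℂ)) * (q:ℂ)^j)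
      = ((Real.log (1 + t*q^j) : ℝ) : ℂ) := by
    intro j
    have h1 : 1 - (-(t:ℂ)) * (q:ℂ)^j = ((1 + t*q^j : ℝ) : ℂ) := by push_cast; ring
    rw [h1, ← Complex.ofReal_log (by nlinarith [htpos j])]
  have hminusterm : ∀ j : ℕ, Complex.log (1 - (t:ℂ) * (q:ℂ)^j)
      = ((Real.log (1 - t*q^j) : ℝ) : ℂ) := by
    intro j
    have h1 : 1 - (t:ℂ) * (q:ℂ)^j = ((1 - t*q^j : ℝ) : ℂ) := by push_cast; ring
    rw [h1, ← Complex.ofReal_log (by nlinarith [hlt j])]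
  have hsp : Summable fun j : ℕ => Real.log (1 + t*q^j) := by
    have h := auxSummableLog q hq0 hq1 (-(t:ℂ)) hnt
    rw [funext hplusterm] at h
    exact Complex.summable_ofReal.mp h
  have hsm : Summable fun j : ℕ => Real.log (1 - t*q^j) := by
    have h := auxSummableLog q hq0 hq1 ((t:ℝ):ℂ) hpt
    rw [funext hminusterm] at h
    exact Complex.summable_ofReal.mp h
  have e1 : qpInf (q:ℂ) (-(t:ℂ)) = ((Real.exp (∑' j : ℕ, Real.log (1 + t*q^j)) : ℝ) : ℂ) := by
    rw [auxQpInfExp q hq0 hq1 _ hnt, tsum_congr hplusterm, ← Complex.ofReal_tsum,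
      Complex.ofReal_exp]
  have e2 : qpInf (q:ℂ) ((t:ℝ):ℂ) = ((Real.exp (∑' j : ℕ, Real.log (1 - t*q^j)) : ℝ) : ℂ) := by
    rw [auxQpInfExp q hq0 hq1 _ hpt, tsum_congr hminusterm, ← Complex.ofReal_tsum,
      Complex.ofReal_exp]
  rw [e1, e2, ← Complex.ofReal_sub, Complex.ofReal_ne_zero, sub_ne_zero]
  have hlt' : (∑' j : ℕ, Real.log (1 - t*q^j)) < ∑' j : ℕ, Real.log (1 + t*q^j) := by
    refine Summable.tsum_lt_tsum (i := 0) (fun j => ?_) ?_ hsm hsp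
    · exact Real.log_le_log (by nlinarith [hlt j]) (by nlinarith [htpos j])
    · have h0 := htpos 0
      exact Real.log_lt_log (by nlinarith [hlt 0]) (by nlinarith)
  exact (Real.exp_lt_exp.mpr hlt').ne'

/-- Relation between the q-Bernoulli numbers `β_n(q²)` to base `q²`
and the Ismail–Mansour q-Bernoulli numbers `B_n(q)`. -/
theorem beta_numbers_vs_IsmailMansour (q : ℝ) (hq0 : 0 < q) (hq1 : q < 1)
    (βn Bn : ℕ → ℂ)
    (hβ : ∃ r : ℝ, 0 < r ∧ ∀ w : ℂ, ‖w‖ < r → ∃ S : ℂ,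
      HasSum (fun n : ℕ => βn n * w ^ n) S ∧
      S * (qpInf (q : ℂ) (-w) - qpInf (q : ℂ) w) = w * qpInf (q : ℂ) w)
    (hB : ∃ r : ℝ, 0 < r ∧ ∀ y : ℂ, ‖y‖ < r → ∃ S : ℂ,
      HasSum (fun n : ℕ => Bn n * y ^ n / qfact (q : ℂ) n) S ∧
      S * (qpInf (q : ℂ) (-((1 - (q : ℂ)) * y / 2)) / qpInf (q : ℂ) ((1 - (q : ℂ)) * y / 2) - 1)
        = y) :
    ∀ n : ℕ, βn n = Bn n * (2 : ℂ) ^ ((n : ℤ) - 1) * (1 - (q : ℂ)) / qp (q : ℂ) (q : ℂ) n := by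
  obtain ⟨r1, hr1, h1all⟩ := hβ
  obtain ⟨r2, hr2, h2all⟩ := hB
  have hq1r : (0:ℝ) < 1 - q := by linarith
  have hc1 : (1:ℂ) - (q:ℂ) ≠ 0 := by
    have h : ((1 - q : ℝ) : ℂ) ≠ 0 := by exact_mod_cast hq1r.ne'
    simpa [Complex.ofReal_sub] using h
  set cn : ℕ → ℂ := fun n => βn n - Bn n * (2:ℂ)^((n:ℤ)-1) * (1 - (q:ℂ)) / qp (q:ℂ) (q:ℂ) n
    with hcn
  set r : ℝ := min r1 (min (r2 * (1-q)/2) (1/2)) with hrdef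
  have hr : 0 < r := lt_min hr1 (lt_min (by positivity) (by norm_num))
  have hrle : r ≤ 1/2 := (min_le_right _ _).trans (min_le_right _ _)
  have key : ∀ w : ℂ, ‖w‖ < r → ∃ S : ℂ, HasSum (fun n => cn n * w^n) S ∧
      S * (qpInf (q:ℂ) (-w) - qpInf (q:ℂ) w) = 0 := by
    intro w hw
    have hw1 : ‖w‖ < r1 := hw.trans_le (min_le_left _ _)
    have hw2 : ‖w‖ < r2 * (1-q)/2 := hw.trans_le ((min_le_right _ _).trans (min_le_left _ _))
    have hwhalf : ‖w‖ ≤ 1/2 := le_of_lt (hw.trans_le hrle)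
    obtain ⟨S1, hS1, hE1⟩ := h1all w hw1
    set y : ℂ := 2 * w / (1 - (q:ℂ)) with hy
    have hc1n : ‖(1:ℂ) - (q:ℂ)‖ = 1 - q := by
      rw [show (1:ℂ) - (q:ℂ) = ((1-q:ℝ):ℂ) by push_cast; ring, Complex.norm_real,
        Real.norm_eq_abs, abs_of_pos hq1r]
    have hynorm : ‖y‖ < r2 := by
      rw [hy, norm_div, norm_mul, hc1n, div_lt_iff₀ hq1r]
      have h2 : ‖(2:ℂ)‖ = 2 := by norm_num
      rw [h2]; nlinarith
    obtain ⟨S2, hS2, hE2⟩ := h2all y hynorm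
    have hyw : (1 - (q:ℂ)) * y / 2 = w := by rw [hy]; field_simp
    rw [hyw] at hE2
    have hP : qpInf (q:ℂ) w ≠ 0 := auxQpInfNe q hq0 hq1 w hwhalf
    have hAP : qpInf (q:ℂ) (-w) / qpInf (q:ℂ) w * qpInf (q:ℂ) w = qpInf (q:ℂ) (-w) :=
      div_mul_cancel₀ _ hP
    have hE2' : S2 * (qpInf (q:ℂ) (-w) - qpInf (q:ℂ) w) = y * qpInf (q:ℂ) w := by
      linear_combination (qpInf (q:ℂ) w) * hE2 - S2 * hAP
    have hyc : (1 - (q:ℂ)) * y = 2 * w := by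
      rw [hy]; field_simp
    have hE2'' : (1 - (q:ℂ)) * (S2 * (qpInf (q:ℂ) (-w) - qpInf (q:ℂ) w)) = 2 * w * qpInf (q:ℂ) w := by
      linear_combination (1 - (q:ℂ)) * hE2' + (qpInf (q:ℂ) w) * hyc
    have hS2' : HasSum
        (fun n => (Bn n * (2:ℂ)^((n:ℤ)-1) * (1 - (q:ℂ)) / qp (q:ℂ) (q:ℂ) n) * w^n)
        ((1 - (q:ℂ))/2 * S2) := by
      have h := hS2.mul_left ((1 - (q:ℂ))/2)
      have hfun : (fun n : ℕ => (1 - (q:ℂ))/2 * (Bn n * y^n / qfact (q:ℂ) n))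
          = fun n : ℕ => (Bn n * (2:ℂ)^((n:ℤ)-1) * (1 - (q:ℂ)) / qp (q:ℂ) (q:ℂ) n) * w^n := by
        funext n
        have h2z : (2:ℂ)^((n:ℤ)-1) = 2^n / 2 := by
          rw [zpow_sub₀ two_ne_zero, zpow_one, zpow_natCast]
        have hqpn := auxQpNe q hq0 hq1 n
        simp only [hy, qfact, h2z]
        field_simp
        rw [div_pow, mul_assoc, div_mul_cancel₀ _ (pow_ne_zero _ hc1)]
        ring
      rwa [hfun] at h
    refine ⟨S1 - (1 - (q:ℂ))/2 * S2, ?_, ?_⟩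
    · have h := hS1.sub hS2'
      have hfun2 : (fun n : ℕ => βn n * w^n -
          (Bn n * (2:ℂ)^((n:ℤ)-1) * (1 - (q:ℂ)) / qp (q:ℂ) (q:ℂ) n) * w^n)
          = fun n : ℕ => cn n * w^n := by
        funext n; rw [hcn]; ring
      rwa [hfun2] at h
    · linear_combination hE1 - (1/2 : ℂ) * hE2''
  set g : ℂ → ℂ := fun z => ∑' n : ℕ, cn n * z^n with hg
  have hval : ∀ w : ℂ, ‖w‖ < r → HasSum (fun n => cn n * w^n) (g w) := by
    intro w hw
    obtain ⟨S, hS, -⟩ := key w hw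
    have hgw : g w = S := hS.tsum_eq
    rwa [hgw]
  have hzero : ∀ t : ℝ, 0 < t → t < r → g ((t:ℝ):ℂ) = 0 := by
    intro t ht0 htr
    have hnt : ‖((t:ℝ):ℂ)‖ < r := by
      rwa [Complex.norm_real, Real.norm_eq_abs, abs_of_pos ht0]
    obtain ⟨S, hS, hv⟩ := key _ hnt
    have hD := auxDne q hq0 hq1 t ht0 (htr.le.trans hrle)
    have hS0 : S = 0 := by
      rcases mul_eq_zero.mp hv with h | h
      · exact h
      · exact absurd h hD
    rw [show g ((t:ℝ):ℂ) = S from hS.tsum_eq, hS0]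
  set p : FormalMultilinearSeries ℂ ℂ ℂ := FormalMultilinearSeries.ofScalars ℂ cn with hpdef
  have hr2' : (0:ℝ) < r/2 := by positivity
  have hrad : ENNReal.ofReal (r/2) ≤ p.radius := by
    have hsum : Summable (fun n : ℕ => cn n * ((r/2 : ℝ):ℂ)^n) := by
      refine (hval _ ?_).summable
      rw [Complex.norm_real, Real.norm_eq_abs, abs_of_pos hr2']; linarith
    have hnorm : Summable fun n : ℕ => ‖p n‖ * ((⟨r/2, hr2'.le⟩ : NNReal) : ℝ)^n := by
      refine (summable_norm_iff.mpr hsum).congr fun n => ?_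
      rw [norm_mul, norm_pow, Complex.norm_real, Real.norm_eq_abs, abs_of_pos hr2',
        hpdef, FormalMultilinearSeries.ofScalars_norm]
    have h := p.le_radius_of_summable hnorm
    rwa [ENNReal.ofReal_eq_coe_nnreal hr2'.le]
  have hball : HasFPowerSeriesOnBall g p 0 (ENNReal.ofReal (r/2)) := by
    refine ⟨hrad, ENNReal.ofReal_pos.mpr hr2', ?_⟩
    intro z hz
    rw [mem_emetric_ball_zero_iff, ← ofReal_norm] at hz
    have hz' : ‖z‖ < r/2 := (ENNReal.ofReal_lt_ofReal_iff hr2').mp hz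
    have h := hval z (by linarith)
    rw [zero_add]
    have hfun : (fun n : ℕ => p n fun _ => z) = fun n : ℕ => cn n * z^n := by
      funext n
      rw [hpdef, FormalMultilinearSeries.ofScalars_apply_eq, smul_eq_mul]
    rwa [hfun]
  have hat : HasFPowerSeriesAt g p 0 := ⟨_, hball⟩
  have htend : Filter.Tendsto (fun k : ℕ => (((r/((k:ℝ)+2) : ℝ)):ℂ)) Filter.atTop
      (𝓝[≠] (0:ℂ)) := by
    apply tendsto_nhdsWithin_of_tendsto_nhds_of_eventually_within
    · have h1 : Filter.Tendsto (fun k : ℕ => (r/((k:ℝ)+2) : ℝ)) Filter.atTop (𝓝 0) := by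
        apply Filter.Tendsto.div_atTop (tendsto_const_nhds)
        exact Filter.tendsto_atTop_add_const_right _ 2 tendsto_natCast_atTop_atTop
      have h2 := (Complex.continuous_ofReal.tendsto 0).comp h1
      simpa [Function.comp_def] using h2
    · refine Filter.Eventually.of_forall fun k => ?_
      have hpos : (0:ℝ) < r/((k:ℝ)+2) := by positivity
      simp only [Set.mem_compl_iff, Set.mem_singleton_iff]
      exact_mod_cast hpos.ne'
  have hfreq : ∃ᶠ z in 𝓝[≠] (0:ℂ), g z = 0 := by
    refine htend.frequently (Filter.Frequently.of_forall fun k => ?_)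
    refine hzero _ (by positivity) ?_
    apply div_lt_self hr
    have : (0:ℝ) ≤ (k:ℝ) := Nat.cast_nonneg k
    linarith
  have hev : ∀ᶠ z in 𝓝 (0:ℂ), g z = 0 :=
    (hat.analyticAt.frequently_zero_iff_eventually_zero).mp hfreq
  have hp0 : p = 0 := hat.eq_zero_of_eventually (by filter_upwards [hev] with z hz using hz)
  have hcz : cn = 0 := by
    rw [hpdef] at hp0
    exact (FormalMultilinearSeries.ofScalars_series_eq_zero (E := ℂ)).mp hp0
  intro n
  have h0 : cn n = 0 := by rw [hcz]; rfl
  rw [hcn] at h0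
  simp only at h0
  exact sub_eq_zero.mp h0

end
end

section
/- Let 0<q<1. For every n≥0 and every x∈ℂ: 𝓑_n(−x;q) = (−1)^n·𝓑_n(x;q), and β_n(−x;q) = (−1)^n·Σ_{k=0}^{n} [(−1;q^{1/2})_k/(q^{1/2};q^{1/2})_k]·β_{n−k}(x;q). -/
open Complex Filter
open scoped Topology

noncomputable section

private lemma exp_le_inv_one_sub {t : ℝ} (h1 : t < 1) : Real.exp t ≤ (1 - t)⁻¹ := by
  have h : 1 - t ≤ Real.exp (-t) := by
    have := Real.add_one_le_exp (-t); linarith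
  have h0 : 0 < 1 - t := by linarith
  rw [show Real.exp t = (Real.exp (-t))⁻¹ by rw [Real.exp_neg, inv_inv]]
  exact inv_anti₀ h0 h

open Finset in
private lemma prod_approx (pr : ℝ) (hp0 : 0 ≤ pr) (w : ℂ) (N : ℕ) :
    ‖(∏ j ∈ range N, (1 - w * (pr : ℂ) ^ j)) -
        (1 - w * ((∑ j ∈ range N, pr ^ j : ℝ) : ℂ))‖ ≤
      Real.exp (‖w‖ * ∑ j ∈ range N, pr ^ j) - 1 - ‖w‖ * ∑ j ∈ range N, pr ^ j := by
  induction N with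
  | zero => simp
  | succ N ih =>
    set A : ℂ := ∏ j ∈ range N, (1 - w * (pr : ℂ) ^ j) with hA
    set s : ℝ := ∑ j ∈ range N, pr ^ j with hs
    have hs0 : 0 ≤ s := Finset.sum_nonneg fun j _ => pow_nonneg hp0 j
    have hsp : (0:ℝ) ≤ pr ^ N := pow_nonneg hp0 N
    have hw0 : (0:ℝ) ≤ ‖w‖ := norm_nonneg w
    have key : (∏ j ∈ range (N+1), (1 - w * (pr:ℂ)^j)) -
        (1 - w * ((∑ j ∈ range (N+1), pr ^ j : ℝ) : ℂ)) =
        (A - (1 - w * (s:ℂ))) - w * (pr:ℂ)^N * (A - 1) := by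
      rw [prod_range_succ, sum_range_succ, ← hA, ← hs]; push_cast; ring
    have hnorms : ‖w * (s:ℂ)‖ = ‖w‖ * s := by
      rw [norm_mul, Complex.norm_real, Real.norm_of_nonneg hs0]
    have hA1 : ‖A - 1‖ ≤ Real.exp (‖w‖ * s) - 1 := by
      have hsplit : ‖A - 1‖ ≤ ‖A - (1 - w*(s:ℂ))‖ + ‖w * (s:ℂ)‖ := by
        calc ‖A - 1‖ = ‖(A - (1 - w*(s:ℂ))) - w * (s:ℂ)‖ := by ring_nf
          _ ≤ ‖A - (1 - w*(s:ℂ))‖ + ‖w * (s:ℂ)‖ := norm_sub_le _ _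
      rw [hnorms] at hsplit
      linarith [ih]
    have hnormp : ‖w * (pr:ℂ)^N‖ = ‖w‖ * pr ^ N := by
      rw [norm_mul, norm_pow, Complex.norm_real, Real.norm_of_nonneg hp0]
    calc ‖(∏ j ∈ range (N+1), (1 - w * (pr:ℂ)^j)) -
        (1 - w * ((∑ j ∈ range (N+1), pr ^ j : ℝ) : ℂ))‖
        = ‖(A - (1 - w*(s:ℂ))) - w * (pr:ℂ)^N * (A - 1)‖ := by rw [key]
      _ ≤ ‖A - (1 - w*(s:ℂ))‖ + ‖w * (pr:ℂ)^N‖ * ‖A - 1‖ := by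
          refine (norm_sub_le _ _).trans ?_
          rw [norm_mul]
      _ ≤ (Real.exp (‖w‖*s) - 1 - ‖w‖*s) + (‖w‖*pr^N) * (Real.exp (‖w‖*s) - 1) := by
          rw [hnormp]
          have h2 : (0:ℝ) ≤ ‖w‖ * pr ^ N := by positivity
          have h3 : (0:ℝ) ≤ Real.exp (‖w‖*s) - 1 := by
            have := Real.one_le_exp (by positivity : (0:ℝ) ≤ ‖w‖*s); linarith
          have := mul_le_mul_of_nonneg_left hA1 h2
          linarith [ih]
      _ ≤ Real.exp (‖w‖ * ∑ j ∈ range (N+1), pr ^ j) - 1 - ‖w‖ * ∑ j ∈ range (N+1), pr ^ j := by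
          rw [sum_range_succ, ← hs]
          have hh : (0:ℝ) ≤ ‖w‖ * pr^N := by positivity
          have e1 : Real.exp (‖w‖ * (s + pr^N)) = Real.exp (‖w‖*s) * Real.exp (‖w‖*pr^N) := by
            rw [← Real.exp_add]; ring_nf
          nlinarith [Real.add_one_le_exp (‖w‖*pr^N), Real.exp_pos (‖w‖*s),
            mul_le_mul_of_nonneg_left (Real.add_one_le_exp (‖w‖*pr^N)) (Real.exp_pos (‖w‖*s)).le]

private lemma mult_aux (pr : ℝ) (hp0 : 0 ≤ pr) (hp1 : pr < 1) (w : ℂ) (hw : ‖w‖ ≤ 1/2) :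
    Multipliable (fun j : ℕ => 1 - w * (pr:ℂ) ^ j) := by
  have hb : ∀ j : ℕ, ‖w * (pr:ℂ)^j‖ ≤ (1/2) * pr ^ j := by
    intro j
    rw [norm_mul, norm_pow, Complex.norm_real, Real.norm_of_nonneg hp0]
    exact mul_le_mul_of_nonneg_right hw (pow_nonneg hp0 j)
  have hb2 : ∀ j : ℕ, ‖w * (pr:ℂ)^j‖ ≤ 1/2 := fun j => (hb j).trans (by
    have := pow_le_one₀ hp0 hp1.le (n := j); nlinarith)
  have hne : ∀ (_ : Unit) (j : ℕ), (fun j (_ : Unit) => 1 - w * (pr:ℂ)^j) j () ≠ 0 := by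
    intro _ j
    simp only
    intro h
    have : (1:ℂ) = w * (pr:ℂ)^j := by linear_combination h
    have h2 : ‖w * (pr:ℂ)^j‖ = 1 := by rw [← this]; simp
    linarith [hb2 j]
  have := multipliable_one_add_of_summable (f := fun j : ℕ => -(w * (pr:ℂ)^j))
    (Summable.of_nonneg_of_le (fun j => norm_nonneg _) (fun j => by rw [norm_neg]; exact hb j)
      ((summable_geometric_of_lt_one hp0 hp1).mul_left (1/2)))
  simpa [sub_eq_add_neg] using this

private lemma qpInf_approx (pr : ℝ) (hp0 : 0 < pr) (hp1 : pr < 1) (w : ℂ) (hw : ‖w‖ ≤ 1/2) :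
    ‖qpInf (pr:ℂ) w - (1 - w * (((1 - pr)⁻¹ : ℝ) : ℂ))‖ ≤
      Real.exp (‖w‖ * (1 - pr)⁻¹) - 1 - ‖w‖ * (1 - pr)⁻¹ := by
  have hm := mult_aux pr hp0.le hp1 w hw
  have hprod : Tendsto (fun N => ∏ j ∈ Finset.range N, (1 - w * (pr:ℂ)^j)) atTop
      (𝓝 (qpInf (pr:ℂ) w)) := hm.hasProd.tendsto_prod_nat
  have hgeo : Tendsto (fun N => ∑ j ∈ Finset.range N, pr ^ j) atTop (𝓝 ((1-pr)⁻¹)) :=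
    (hasSum_geometric_of_lt_one hp0.le hp1).tendsto_sum_nat
  have h1 : Tendsto (fun N => ‖(∏ j ∈ Finset.range N, (1 - w * (pr:ℂ)^j)) -
      (1 - w * ((∑ j ∈ Finset.range N, pr ^ j : ℝ) : ℂ))‖) atTop
      (𝓝 ‖qpInf (pr:ℂ) w - (1 - w * (((1-pr)⁻¹ : ℝ):ℂ))‖) := by
    apply Tendsto.norm
    apply hprod.sub
    apply Tendsto.const_sub
    exact (((Complex.continuous_ofReal.tendsto _).comp hgeo).const_mul w)
  have hgw : Tendsto (fun N => ‖w‖ * ∑ j ∈ Finset.range N, pr ^ j) atTop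
      (𝓝 (‖w‖ * (1-pr)⁻¹)) := hgeo.const_mul ‖w‖
  have h2 : Tendsto (fun N => Real.exp (‖w‖ * ∑ j ∈ Finset.range N, pr ^ j) - 1 -
      ‖w‖ * ∑ j ∈ Finset.range N, pr ^ j) atTop
      (𝓝 (Real.exp (‖w‖ * (1-pr)⁻¹) - 1 - ‖w‖ * (1-pr)⁻¹)) :=
    (((Real.continuous_exp.tendsto _).comp hgw).sub tendsto_const_nhds).sub hgw
  exact le_of_tendsto_of_tendsto' h1 h2 (fun N => prod_approx pr hp0.le w N)

private lemma t_lt_half {pr : ℝ} (hp1 : pr < 1) {w : ℂ} (hw : ‖w‖ < (1 - pr)/2) :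
    ‖w‖ * (1 - pr)⁻¹ < 1/2 := by
  have h0 : (0:ℝ) < 1 - pr := by linarith
  rw [show (1/2 : ℝ) = ((1-pr)/2) * (1-pr)⁻¹ by field_simp]
  exact mul_lt_mul_of_pos_right hw (inv_pos.2 h0)

private lemma w_le_half {pr : ℝ} (hp0 : 0 < pr) (hp1 : pr < 1) {w : ℂ}
    (hw : ‖w‖ < (1 - pr)/2) : ‖w‖ ≤ 1/2 := by nlinarith

private lemma P_sub_one (pr : ℝ) (hp0 : 0 < pr) (hp1 : pr < 1) (w : ℂ)
    (hw : ‖w‖ < (1 - pr)/2) :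
    ‖qpInf (pr:ℂ) w - 1‖ ≤ 2 * (‖w‖ * (1 - pr)⁻¹) := by
  have hip : (0:ℝ) < (1-pr)⁻¹ := inv_pos.2 (by linarith)
  set t : ℝ := ‖w‖ * (1 - pr)⁻¹ with hts
  have ht0 : 0 ≤ t := by positivity
  have ht : t < 1/2 := t_lt_half hp1 hw
  have h1 := qpInf_approx pr hp0 hp1 w (w_le_half hp0 hp1 hw)
  have h2 : ‖qpInf (pr:ℂ) w - 1‖ ≤ ‖qpInf (pr:ℂ) w - (1 - w * (((1-pr)⁻¹:ℝ):ℂ))‖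
      + ‖w * (((1-pr)⁻¹:ℝ):ℂ)‖ := by
    calc ‖qpInf (pr:ℂ) w - 1‖
        = ‖(qpInf (pr:ℂ) w - (1 - w * (((1-pr)⁻¹:ℝ):ℂ))) - w * (((1-pr)⁻¹:ℝ):ℂ)‖ := by ring_nf
      _ ≤ _ := norm_sub_le _ _
  have h3 : ‖w * (((1-pr)⁻¹:ℝ):ℂ)‖ = t := by
    rw [norm_mul, Complex.norm_real, Real.norm_of_nonneg hip.le]
  have h4 : Real.exp t ≤ (1 - t)⁻¹ := exp_le_inv_one_sub (by linarith)
  have h6 : (0:ℝ) < 1 - t := by linarith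
  have h5 : (1 - t)⁻¹ - 1 ≤ 2 * t := by
    have he : (1 - t)⁻¹ - 1 = t / (1 - t) := by field_simp; ring
    rw [he, div_le_iff₀ h6]; nlinarith
  rw [h3] at h2
  rw [← hts] at h1
  linarith

private lemma P_ne_zero (pr : ℝ) (hp0 : 0 < pr) (hp1 : pr < 1) (w : ℂ)
    (hw : ‖w‖ < (1 - pr)/2) : qpInf (pr:ℂ) w ≠ 0 := by
  intro h
  have h1 := P_sub_one pr hp0 hp1 w hw
  rw [h] at h1
  simp only [zero_sub, norm_neg, norm_one] at h1
  have ht : ‖w‖ * (1 - pr)⁻¹ < 1/2 := t_lt_half hp1 hw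
  linarith

private lemma F_ne_zero (pr : ℝ) (hp0 : 0 < pr) (hp1 : pr < 1) (w : ℂ) (hw0 : w ≠ 0)
    (hw : ‖w‖ < (1 - pr)/2) : qpInf (pr:ℂ) (-w) - qpInf (pr:ℂ) w ≠ 0 := by
  have hip : (0:ℝ) < (1-pr)⁻¹ := inv_pos.2 (by linarith)
  set t : ℝ := ‖w‖ * (1 - pr)⁻¹ with hts
  have ht0 : 0 < t := by
    have h00 : 0 < ‖w‖ := norm_pos_iff.2 hw0
    positivity
  have ht : t < 1/2 := t_lt_half hp1 hw
  have h1 := qpInf_approx pr hp0 hp1 w (w_le_half hp0 hp1 hw)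
  have h2 := qpInf_approx pr hp0 hp1 (-w) (by rw [norm_neg]; exact w_le_half hp0 hp1 hw)
  rw [norm_neg] at h2
  rw [← hts] at h1 h2
  intro hF
  have key : ‖(qpInf (pr:ℂ) (-w) - qpInf (pr:ℂ) w) - 2*w*(((1-pr)⁻¹:ℝ):ℂ)‖
      ≤ 2 * (Real.exp t - 1 - t) := by
    calc ‖(qpInf (pr:ℂ) (-w) - qpInf (pr:ℂ) w) - 2*w*(((1-pr)⁻¹:ℝ):ℂ)‖
        = ‖(qpInf (pr:ℂ) (-w) - (1 - (-w) * (((1-pr)⁻¹:ℝ):ℂ)))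
            - (qpInf (pr:ℂ) w - (1 - w * (((1-pr)⁻¹:ℝ):ℂ)))‖ := by ring_nf
      _ ≤ ‖qpInf (pr:ℂ) (-w) - (1 - (-w) * (((1-pr)⁻¹:ℝ):ℂ))‖
            + ‖qpInf (pr:ℂ) w - (1 - w * (((1-pr)⁻¹:ℝ):ℂ))‖ := norm_sub_le _ _
      _ ≤ 2 * (Real.exp t - 1 - t) := by linarith
  rw [hF, zero_sub, norm_neg] at key
  have h7 : ‖2*w*(((1-pr)⁻¹:ℝ):ℂ)‖ = 2 * t := by
    rw [norm_mul, norm_mul, Complex.norm_real, Real.norm_of_nonneg hip.le]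
    simp [hts]; ring
  rw [h7] at key
  have h4 : Real.exp t ≤ (1 - t)⁻¹ := exp_le_inv_one_sub (by linarith)
  have h6 : (0:ℝ) < 1 - t := by linarith
  have h5 : (1 - t)⁻¹ - 1 - t < t := by
    rw [show (1-t)⁻¹ - 1 - t = (t^2/(1-t)) by field_simp; ring]
    rw [div_lt_iff₀ h6]
    nlinarith
  linarith

private lemma P_shift (pr : ℝ) (hp0 : 0 < pr) (hp1 : pr < 1) (w : ℂ) (hw : ‖w‖ ≤ 1/2) :
    qpInf (pr:ℂ) w = (1 - w) * qpInf (pr:ℂ) ((pr:ℂ) * w) := by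
  have hpw : ‖(pr:ℂ) * w‖ ≤ 1/2 := by
    rw [norm_mul, Complex.norm_real, Real.norm_of_nonneg hp0.le]
    nlinarith [norm_nonneg w]
  have hfe : (fun n : ℕ => 1 - w * (pr:ℂ)^(n+1)) = fun n : ℕ => 1 - ((pr:ℂ)*w)*(pr:ℂ)^n := by
    funext n; rw [pow_succ]; ring
  have hm1 : Multipliable (fun n : ℕ => 1 - w * (pr:ℂ)^(n+1)) := by
    rw [hfe]; exact mult_aux pr hp0.le hp1 _ hpw
  have := tprod_eq_zero_mul' (f := fun n : ℕ => 1 - w * (pr:ℂ)^n) (by exact hm1)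
  unfold qpInf
  rw [this]
  simp only [pow_zero, mul_one]
  congr 1
  rw [show (fun n : ℕ => 1 - w * (pr:ℂ)^(n+1)) = fun n : ℕ => 1 - ((pr:ℂ)*w)*(pr:ℂ)^n from hfe]

private def cq (pr : ℝ) (k : ℕ) : ℂ := qp (pr:ℂ) (-1) k / qp (pr:ℂ) (pr:ℂ) k

private def Cq (pr : ℝ) (u : ℂ) : ℂ := ∑' k, cq pr k * u ^ k

open Finset in
private lemma qp_neg_one_eq (pr : ℝ) (k : ℕ) :
    qp (pr:ℂ) (-1) k = ((∏ j ∈ range k, (1 + pr ^ j) : ℝ) : ℂ) := by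
  unfold qp; push_cast; exact Finset.prod_congr rfl fun j _ => by ring

open Finset in
private lemma qp_p_eq (pr : ℝ) (k : ℕ) :
    qp (pr:ℂ) (pr:ℂ) k = ((∏ j ∈ range k, (1 - pr * pr ^ j) : ℝ) : ℂ) := by
  unfold qp; push_cast; rfl

open Finset in
private lemma den_pos (pr : ℝ) (hp0 : 0 < pr) (hp1 : pr < 1) (k : ℕ) :
    (0:ℝ) < ∏ j ∈ range k, (1 - pr * pr ^ j) := by
  apply Finset.prod_pos
  intro j _
  have h1 : pr * pr ^ j ≤ pr * 1 := by
    have := pow_le_one₀ hp0.le hp1.le (n := j)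
    nlinarith
  nlinarith

private lemma qp_p_ne_zero (pr : ℝ) (hp0 : 0 < pr) (hp1 : pr < 1) (k : ℕ) :
    qp (pr:ℂ) (pr:ℂ) k ≠ 0 := by
  rw [qp_p_eq]
  exact_mod_cast (den_pos pr hp0 hp1 k).ne'

open Finset in
private lemma cq_norm (pr : ℝ) (hp0 : 0 < pr) (hp1 : pr < 1) (k : ℕ) :
    ‖cq pr k‖ ≤ Real.exp ((1-pr)⁻¹ + pr*(1-pr)⁻¹*(1-pr)⁻¹) := by
  have hS : ∑ j ∈ range k, pr ^ j ≤ (1-pr)⁻¹ :=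
    sum_le_hasSum (range k) (fun i _ => pow_nonneg hp0.le i)
      (hasSum_geometric_of_lt_one hp0.le hp1)
  have hnum : ∏ j ∈ range k, (1 + pr ^ j) ≤ Real.exp ((1-pr)⁻¹) := by
    calc ∏ j ∈ range k, (1 + pr ^ j) ≤ ∏ j ∈ range k, Real.exp (pr ^ j) := by
          apply Finset.prod_le_prod
          · intro j _; positivity
          · intro j _; have := Real.add_one_le_exp (pr ^ j); linarith
      _ = Real.exp (∑ j ∈ range k, pr ^ j) := (Real.exp_sum _ _).symm
      _ ≤ _ := Real.exp_le_exp.2 hS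
  have hden : Real.exp (-(pr*(1-pr)⁻¹*(1-pr)⁻¹)) ≤ ∏ j ∈ range k, (1 - pr * pr ^ j) := by
    have hfac : ∀ j ∈ range k, Real.exp (-(pr * pr ^ j * (1-pr)⁻¹)) ≤ 1 - pr * pr ^ j := by
      intro j _
      set t : ℝ := pr * pr ^ j with hts
      have ht0 : 0 < t := by positivity
      have htp : t ≤ pr := by
        have := pow_le_one₀ hp0.le hp1.le (n := j); nlinarith
      have hS0 : (0:ℝ) < (1-pr)⁻¹ := inv_pos.2 (by linarith)
      have h1 : (1:ℝ) ≤ (1 - t) * (1 + t * (1-pr)⁻¹) := by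
        have hstl : t * ((1-pr) * (1-pr)⁻¹) = t := by
          rw [mul_inv_cancel₀ (by linarith : (1:ℝ)-pr ≠ 0), mul_one]
        nlinarith [mul_le_mul_of_nonneg_left (show (1:ℝ)-pr ≤ 1-t by linarith) hS0.le]
      have h2 : Real.exp (-(t * (1-pr)⁻¹)) ≤ (1 + t * (1-pr)⁻¹)⁻¹ := by
        rw [show Real.exp (-(t*(1-pr)⁻¹)) = (Real.exp (t*(1-pr)⁻¹))⁻¹ by
          rw [Real.exp_neg]]
        exact inv_anti₀ (by positivity)
          (by linarith [Real.add_one_le_exp (t * (1-pr)⁻¹)])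
      have h3 : (1 + t * (1-pr)⁻¹)⁻¹ ≤ 1 - t := by
        rw [inv_le_iff_one_le_mul₀ (by positivity)]
        linarith [h1]
      linarith
    calc Real.exp (-(pr*(1-pr)⁻¹*(1-pr)⁻¹))
        ≤ Real.exp (∑ j ∈ range k, -(pr * pr ^ j * (1-pr)⁻¹)) := by
          apply Real.exp_le_exp.2
          have hS0 : (0:ℝ) ≤ (1-pr)⁻¹ := (inv_pos.2 (by linarith)).le
          have : ∑ j ∈ range k, -(pr * pr ^ j * (1-pr)⁻¹)
              = -((pr * (1-pr)⁻¹) * ∑ j ∈ range k, pr ^ j) := by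
            rw [Finset.mul_sum, ← Finset.sum_neg_distrib]
            exact Finset.sum_congr rfl fun j _ => by ring
          rw [this]
          have : (pr * (1-pr)⁻¹) * ∑ j ∈ range k, pr ^ j ≤ (pr * (1-pr)⁻¹) * (1-pr)⁻¹ :=
            mul_le_mul_of_nonneg_left hS (by positivity)
          linarith
      _ = ∏ j ∈ range k, Real.exp (-(pr * pr ^ j * (1-pr)⁻¹)) := by
          rw [← Real.exp_sum]
      _ ≤ _ := Finset.prod_le_prod (fun j _ => (Real.exp_pos _).le) hfac
  have hnum0 : (0:ℝ) ≤ ∏ j ∈ range k, (1 + pr ^ j) :=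
    Finset.prod_nonneg fun j _ => by positivity
  unfold cq
  rw [qp_neg_one_eq, qp_p_eq, norm_div, Complex.norm_real, Complex.norm_real,
    Real.norm_of_nonneg hnum0, Real.norm_of_nonneg (den_pos pr hp0 hp1 k).le]
  calc (∏ j ∈ range k, (1 + pr ^ j)) / (∏ j ∈ range k, (1 - pr * pr ^ j))
      ≤ Real.exp ((1-pr)⁻¹) / Real.exp (-(pr*(1-pr)⁻¹*(1-pr)⁻¹)) :=
        div_le_div₀ (Real.exp_pos _).le hnum (Real.exp_pos _) hden
    _ = Real.exp ((1-pr)⁻¹ + pr*(1-pr)⁻¹*(1-pr)⁻¹) := by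
        rw [← Real.exp_sub]; ring_nf

private lemma cq_zero (pr : ℝ) : cq pr 0 = 1 := by simp [cq, qp]

private lemma cq_rec (pr : ℝ) (hp0 : 0 < pr) (hp1 : pr < 1) (k : ℕ) :
    cq pr (k+1) * (1 - (pr:ℂ)*(pr:ℂ)^k) = cq pr k * (1 + (pr:ℂ)^k) := by
  have h1 : qp (pr:ℂ) (-1) (k+1) = qp (pr:ℂ) (-1) k * (1 + (pr:ℂ)^k) := by
    unfold qp; rw [Finset.prod_range_succ]; ring
  have h2 : qp (pr:ℂ) (pr:ℂ) (k+1) = qp (pr:ℂ) (pr:ℂ) k * (1 - (pr:ℂ)*(pr:ℂ)^k) := by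
    unfold qp; rw [Finset.prod_range_succ]
  have hne : qp (pr:ℂ) (pr:ℂ) k ≠ 0 := qp_p_ne_zero pr hp0 hp1 k
  have hfac : (1:ℂ) - (pr:ℂ)*(pr:ℂ)^k ≠ 0 := by
    have : ((1 - pr * pr ^ k : ℝ) : ℂ) ≠ 0 := by
      exact_mod_cast (by nlinarith [pow_le_one₀ hp0.le hp1.le (n := k)] : (0:ℝ) < 1 - pr * pr^k).ne'
    push_cast at this
    convert this using 1
  unfold cq
  rw [h1, h2]
  rw [div_mul_eq_mul_div, div_mul_eq_mul_div, div_eq_div_iff (mul_ne_zero hne hfac) hne]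
  ring

private lemma cq_summable (pr : ℝ) (hp0 : 0 < pr) (hp1 : pr < 1) (u : ℂ) (hu : ‖u‖ ≤ 1/2) :
    Summable (fun k => ‖cq pr k * u ^ k‖) := by
  set M := Real.exp ((1-pr)⁻¹ + pr*(1-pr)⁻¹*(1-pr)⁻¹) with hM
  apply Summable.of_nonneg_of_le (fun k => norm_nonneg _)
    (f := fun k => M * (1/2)^k)
  · intro k
    rw [norm_mul, norm_pow]
    have h1 := cq_norm pr hp0 hp1 k
    have h2 : ‖u‖^k ≤ (1/2)^k := pow_le_pow_left₀ (norm_nonneg u) hu k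
    have h3 : (0:ℝ) ≤ ‖u‖^k := by positivity
    nlinarith [Real.exp_pos ((1-pr)⁻¹ + pr*(1-pr)⁻¹*(1-pr)⁻¹), pow_nonneg (by norm_num : (0:ℝ) ≤ 1/2) k]
  · exact (summable_geometric_of_lt_one (by norm_num) (by norm_num)).mul_left M

private lemma C_hasSum (pr : ℝ) (hp0 : 0 < pr) (hp1 : pr < 1) (u : ℂ) (hu : ‖u‖ ≤ 1/2) :
    HasSum (fun k => cq pr k * u ^ k) (Cq pr u) :=
  (cq_summable pr hp0 hp1 u hu).of_norm.hasSum

private lemma C_feq (pr : ℝ) (hp0 : 0 < pr) (hp1 : pr < 1) (u : ℂ) (hu : ‖u‖ ≤ 1/2) :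
    (1 - u) * Cq pr u = (1 + u) * Cq pr ((pr:ℂ)*u) := by
  have hpu : ‖(pr:ℂ)*u‖ ≤ 1/2 := by
    rw [norm_mul, Complex.norm_real, Real.norm_of_nonneg hp0.le]
    nlinarith [norm_nonneg u]
  have hCu := C_hasSum pr hp0 hp1 u hu
  have hCpu := C_hasSum pr hp0 hp1 _ hpu
  have h1 : HasSum (fun k => cq pr k * (1 - (pr:ℂ)^k) * u^k)
      (Cq pr u - Cq pr ((pr:ℂ)*u)) := by
    have h := hCu.sub hCpu
    have heq : (fun k => cq pr k * u^k - cq pr k * ((pr:ℂ)*u)^k)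
        = fun k => cq pr k * (1 - (pr:ℂ)^k) * u^k := by
      funext k; rw [mul_pow]; ring
    rwa [heq] at h
  have h2 : HasSum (fun k => cq pr (k+1) * (1 - (pr:ℂ)^(k+1)) * u^(k+1))
      (Cq pr u - Cq pr ((pr:ℂ)*u)) := by
    apply (hasSum_nat_add_iff (f := fun k => cq pr k * (1 - (pr:ℂ)^k) * u^k) 1).mpr
    simpa using h1
  have heq2 : (fun k => cq pr (k+1) * (1 - (pr:ℂ)^(k+1)) * u^(k+1))
      = fun k => (cq pr k * u^k + cq pr k * ((pr:ℂ)*u)^k) * u := by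
    funext k
    have := cq_rec pr hp0 hp1 k
    rw [mul_pow]
    linear_combination u^(k+1) * this
  rw [heq2] at h2
  have h4 : HasSum (fun k => (cq pr k * u^k + cq pr k * ((pr:ℂ)*u)^k) * u)
      ((Cq pr u + Cq pr ((pr:ℂ)*u)) * u) := (hCu.add hCpu).mul_right u
  have h5 := h2.unique h4
  linear_combination h5

private lemma C_sub_one (pr : ℝ) (hp0 : 0 < pr) (hp1 : pr < 1) (u : ℂ) (hu : ‖u‖ ≤ 1/2) :
    ‖Cq pr u - 1‖ ≤ 2 * Real.exp ((1-pr)⁻¹ + pr*(1-pr)⁻¹*(1-pr)⁻¹) * ‖u‖ := by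
  set M := Real.exp ((1-pr)⁻¹ + pr*(1-pr)⁻¹*(1-pr)⁻¹) with hM
  have hM0 : 0 < M := Real.exp_pos _
  have hC := C_hasSum pr hp0 hp1 u hu
  have h5 : HasSum (fun k => cq pr (k+1) * u^(k+1)) (Cq pr u - 1) := by
    apply (hasSum_nat_add_iff (f := fun k => cq pr k * u^k) 1).mpr
    simpa [cq_zero] using hC
  have hbnd : ∀ k : ℕ, ‖cq pr (k+1) * u^(k+1)‖ ≤ (M * ‖u‖) * (1/2)^k := by
    intro k
    rw [norm_mul, norm_pow, pow_succ]
    have h1 := cq_norm pr hp0 hp1 (k+1)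
    have h2 : ‖u‖^k ≤ (1/2)^k := pow_le_pow_left₀ (norm_nonneg u) hu k
    have h3 : (0:ℝ) ≤ ‖u‖^k := by positivity
    have h4 : ‖u‖^k * ‖u‖ ≤ (1/2)^k * ‖u‖ :=
      mul_le_mul_of_nonneg_right h2 (norm_nonneg u)
    calc ‖cq pr (k+1)‖ * (‖u‖^k * ‖u‖) ≤ M * ((1/2)^k * ‖u‖) := by
          apply mul_le_mul h1 h4 (by positivity) hM0.le
      _ = (M * ‖u‖) * (1/2)^k := by ring
  have hsum : Summable (fun k => ‖cq pr (k+1) * u^(k+1)‖) :=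
    Summable.of_nonneg_of_le (fun k => norm_nonneg _) hbnd
      ((summable_geometric_of_lt_one (by norm_num) (by norm_num)).mul_left (M * ‖u‖))
  have h6 : ‖Cq pr u - 1‖ ≤ ∑' k, ‖cq pr (k+1) * u^(k+1)‖ := by
    rw [← h5.tsum_eq]
    exact norm_tsum_le_tsum_norm hsum
  have h7 : ∑' k, ‖cq pr (k+1) * u^(k+1)‖ ≤ ∑' k : ℕ, (M * ‖u‖) * (1/2)^k :=
    Summable.tsum_le_tsum hbnd hsum
      ((summable_geometric_of_lt_one (by norm_num) (by norm_num)).mul_left (M * ‖u‖))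
  have h8 : ∑' k : ℕ, (M * ‖u‖) * (1/2:ℝ)^k = (M * ‖u‖) * 2 := by
    rw [tsum_mul_left, tsum_geometric_of_lt_one (by norm_num) (by norm_num)]
    norm_num
  rw [h8] at h7
  linarith

private lemma qbinom (pr : ℝ) (hp0 : 0 < pr) (hp1 : pr < 1) (u : ℂ) (hu : ‖u‖ < (1-pr)/2) :
    Cq pr u * qpInf (pr:ℂ) u = qpInf (pr:ℂ) (-u) := by
  set M := Real.exp ((1-pr)⁻¹ + pr*(1-pr)⁻¹*(1-pr)⁻¹) with hM
  have hM0 : 0 < M := Real.exp_pos _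
  set K : ℝ := 4*M + 4*(1-pr)⁻¹ with hK
  have hS0 : (0:ℝ) < (1-pr)⁻¹ := inv_pos.2 (by linarith)
  have hK0 : 0 < K := by positivity
  set D : ℂ → ℂ := fun v => Cq pr v * qpInf (pr:ℂ) v - qpInf (pr:ℂ) (-v) with hD
  have hstep : ∀ v : ℂ, ‖v‖ < (1-pr)/2 → D v = (1 + v) * D ((pr:ℂ)*v) := by
    intro v hv
    have hv2 : ‖v‖ ≤ 1/2 := w_le_half hp0 hp1 hv
    have h1 := P_shift pr hp0 hp1 v hv2
    have h2 := P_shift pr hp0 hp1 (-v) (by rwa [norm_neg])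
    have h3 := C_feq pr hp0 hp1 v hv2
    rw [show (pr:ℂ) * -v = -((pr:ℂ)*v) by ring] at h2
    simp only [hD]
    rw [h1, h2]
    linear_combination qpInf (pr:ℂ) ((pr:ℂ)*v) * h3
  have hlt : ∀ N : ℕ, ‖(pr:ℂ)^N * u‖ < (1-pr)/2 := by
    intro N
    rw [norm_mul, norm_pow, Complex.norm_real, Real.norm_of_nonneg hp0.le]
    have h1 : pr^N ≤ 1 := pow_le_one₀ hp0.le hp1.le
    nlinarith [norm_nonneg u]
  have hiter : ∀ N : ℕ, D u = (∏ j ∈ Finset.range N, (1 + (pr:ℂ)^j * u)) * D ((pr:ℂ)^N * u) := by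
    intro N; induction N with
    | zero => simp
    | succ N ih =>
      rw [ih, hstep _ (hlt N), Finset.prod_range_succ]
      rw [show (pr:ℂ) * ((pr:ℂ)^N * u) = (pr:ℂ)^(N+1) * u by rw [pow_succ]; ring]
      ring
  have hDb : ∀ v : ℂ, ‖v‖ < (1-pr)/2 → ‖D v‖ ≤ K * ‖v‖ := by
    intro v hv
    have hv2 : ‖v‖ ≤ 1/2 := w_le_half hp0 hp1 hv
    have hC1 := C_sub_one pr hp0 hp1 v hv2
    have hP1 := P_sub_one pr hp0 hp1 v hv
    have hP2 := P_sub_one pr hp0 hp1 (-v) (by rwa [norm_neg])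
    rw [norm_neg] at hP2
    have ht : ‖v‖ * (1-pr)⁻¹ < 1/2 := t_lt_half hp1 hv
    have hPb : ‖qpInf (pr:ℂ) v‖ ≤ 2 := by
      have h9 : ‖qpInf (pr:ℂ) v‖ ≤ ‖qpInf (pr:ℂ) v - 1‖ + 1 := by
        calc ‖qpInf (pr:ℂ) v‖ = ‖(qpInf (pr:ℂ) v - 1) + 1‖ := by ring_nf
          _ ≤ _ := by simpa using norm_add_le (qpInf (pr:ℂ) v - 1) 1
      linarith
    have hsplit : D v = (Cq pr v - 1) * qpInf (pr:ℂ) v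
        + (qpInf (pr:ℂ) v - 1) - (qpInf (pr:ℂ) (-v) - 1) := by
      simp only [hD]; ring
    have hstep1 : ‖D v‖ ≤ ‖(Cq pr v - 1) * qpInf (pr:ℂ) v‖ + ‖qpInf (pr:ℂ) v - 1‖
        + ‖qpInf (pr:ℂ) (-v) - 1‖ := by
      rw [hsplit]
      refine (norm_sub_le _ _).trans ?_
      have := norm_add_le ((Cq pr v - 1) * qpInf (pr:ℂ) v) (qpInf (pr:ℂ) v - 1)
      linarith
    have hmul : ‖(Cq pr v - 1) * qpInf (pr:ℂ) v‖ ≤ (2*M*‖v‖) * 2 := by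
      rw [norm_mul]
      have := mul_le_mul hC1 hPb (norm_nonneg _) (by positivity)
      linarith
    have hfin : ‖D v‖ ≤ (2*M*‖v‖) * 2 + 2*(‖v‖*(1-pr)⁻¹) + 2*(‖v‖*(1-pr)⁻¹) := by
      linarith
    calc ‖D v‖ ≤ (2*M*‖v‖) * 2 + 2*(‖v‖*(1-pr)⁻¹) + 2*(‖v‖*(1-pr)⁻¹) := hfin
      _ = K * ‖v‖ := by rw [hK]; ring
  have hb : ∀ N : ℕ, ‖D u‖ ≤ Real.exp ((1-pr)⁻¹) * (K * (pr^N * ‖u‖)) := by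
    intro N
    have hn : ‖(pr:ℂ)^N * u‖ = pr^N * ‖u‖ := by
      rw [norm_mul, norm_pow, Complex.norm_real, Real.norm_of_nonneg hp0.le]
    have hprod : ‖∏ j ∈ Finset.range N, (1 + (pr:ℂ)^j * u)‖ ≤ Real.exp ((1-pr)⁻¹) := by
      rw [norm_prod]
      have hfac : ∀ j ∈ Finset.range N, ‖1 + (pr:ℂ)^j * u‖ ≤ Real.exp (pr^j * ‖u‖) := by
        intro j _
        refine (norm_add_le _ _).trans ?_
        rw [norm_one, norm_mul, norm_pow, Complex.norm_real, Real.norm_of_nonneg hp0.le]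
        have := Real.add_one_le_exp (pr^j * ‖u‖)
        linarith
      calc ∏ j ∈ Finset.range N, ‖1 + (pr:ℂ)^j * u‖
          ≤ ∏ j ∈ Finset.range N, Real.exp (pr^j * ‖u‖) :=
            Finset.prod_le_prod (fun j _ => norm_nonneg _) hfac
        _ = Real.exp (∑ j ∈ Finset.range N, pr^j * ‖u‖) := (Real.exp_sum _ _).symm
        _ ≤ Real.exp ((1-pr)⁻¹) := by
            apply Real.exp_le_exp.2
            have hgs : ∑ j ∈ Finset.range N, pr ^ j ≤ (1-pr)⁻¹ :=
              sum_le_hasSum (Finset.range N) (fun i _ => pow_nonneg hp0.le i)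
                (hasSum_geometric_of_lt_one hp0.le hp1)
            have hu1 : ‖u‖ ≤ 1 := by
              have := w_le_half hp0 hp1 hu; linarith
            calc ∑ j ∈ Finset.range N, pr^j * ‖u‖
                = (∑ j ∈ Finset.range N, pr^j) * ‖u‖ := by rw [Finset.sum_mul]
              _ ≤ (1-pr)⁻¹ * 1 := by
                  apply mul_le_mul hgs hu1 (norm_nonneg u) hS0.le
              _ = (1-pr)⁻¹ := mul_one _
    calc ‖D u‖ = ‖(∏ j ∈ Finset.range N, (1 + (pr:ℂ)^j * u))‖ * ‖D ((pr:ℂ)^N * u)‖ := by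
          rw [hiter N, norm_mul]
      _ ≤ Real.exp ((1-pr)⁻¹) * (K * (pr^N * ‖u‖)) := by
          apply mul_le_mul hprod ?_ (norm_nonneg _) (Real.exp_pos _).le
          have := hDb _ (hlt N)
          rwa [hn] at this
  have hten : Tendsto (fun N : ℕ => Real.exp ((1-pr)⁻¹) * (K * (pr^N * ‖u‖))) atTop (𝓝 0) := by
    have h1 : Tendsto (fun N : ℕ => pr ^ N) atTop (𝓝 0) :=
      tendsto_pow_atTop_nhds_zero_of_lt_one hp0.le hp1
    have := ((h1.mul_const ‖u‖).const_mul K).const_mul (Real.exp ((1-pr)⁻¹))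
    simpa using this
  have hle : ‖D u‖ ≤ 0 := ge_of_tendsto' hten hb
  have hD0 : D u = 0 := norm_eq_zero.mp (le_antisymm hle (norm_nonneg _))
  have := sub_eq_zero.mp hD0
  exact this

private lemma coeffs_eq_zero {a : ℕ → ℂ} {δ : ℝ} (hδ : 0 < δ)
    (h : ∀ w : ℂ, ‖w‖ < δ → HasSum (fun n => a n * w ^ n) 0) (n : ℕ) : a n = 0 := by
  set p : FormalMultilinearSeries ℂ ℂ ℂ := FormalMultilinearSeries.ofScalars ℂ a with hps
  have hδ2 : (0:ℝ) < δ/2 := by linarith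
  obtain ⟨C, hC⟩ : ∃ C, ∀ m, ‖a m‖ * (δ/2) ^ m ≤ C := by
    have hs := (h ((δ/2 : ℝ) : ℂ) (by
      rw [Complex.norm_real, Real.norm_of_nonneg hδ2.le]; linarith)).summable
    have ht : Tendsto (fun m => ‖a m * ((δ/2:ℝ):ℂ) ^ m‖) atTop (𝓝 0) := by
      simpa using hs.tendsto_atTop_zero.norm
    obtain ⟨C, hC⟩ := ht.bddAbove_range
    refine ⟨C, fun m => ?_⟩
    have := hC (Set.mem_range_self m)
    rwa [norm_mul, norm_pow, Complex.norm_real, Real.norm_of_nonneg hδ2.le] at this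
  set r : NNReal := ⟨δ/2, hδ2.le⟩ with hrs
  have hrad : (r : ENNReal) ≤ p.radius := by
    apply p.le_radius_of_bound C
    intro m
    have h1 : ‖p m‖ = ‖a m‖ := FormalMultilinearSeries.ofScalars_norm ℂ a m
    rw [h1]
    exact hC m
  have hrpos : (0 : NNReal) < r := by
    rw [← NNReal.coe_lt_coe]
    exact hδ2
  have hball : HasFPowerSeriesOnBall (0 : ℂ → ℂ) p 0 (r : ENNReal) := by
    refine ⟨hrad, ENNReal.coe_pos.2 hrpos, ?_⟩
    intro y hy
    have hy' : ‖y‖ < δ := by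
      rw [mem_emetric_ball_zero_iff] at hy
      have : ‖y‖₊ < r := by exact_mod_cast hy
      have h2 : ‖y‖ < δ/2 := by
        rw [← NNReal.coe_lt_coe] at this
        exact this
      linarith
    have h3 := h y hy'
    have h4 : (fun m => p m fun _ => y) = fun m => a m * y ^ m := by
      funext m
      rw [hps, FormalMultilinearSeries.ofScalars_apply_eq, smul_eq_mul]
    rw [h4]
    simpa using h3
  have hp0 : p = 0 := HasFPowerSeriesAt.eq_zero ⟨(r : ENNReal), hball⟩
  have h5 : p n (fun _ => (1:ℂ)) = a n := by
    rw [hps, FormalMultilinearSeries.ofScalars_apply_eq, smul_eq_mul, one_pow, mul_one]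
  rw [hp0] at h5
  simpa using h5.symm

private lemma summable_norm_of_hasSum {g : ℕ → ℂ} {r : ℝ} (hr : 0 < r)
    (h : Summable (fun m => g m * ((r/2 : ℝ) : ℂ) ^ m)) {w : ℂ} (hw : ‖w‖ ≤ r/4) :
    Summable (fun m => ‖g m * w ^ m‖) := by
  have hr2 : (0:ℝ) < r/2 := by linarith
  have ht : Tendsto (fun m => ‖g m‖ * (r/2)^m) atTop (𝓝 0) := by
    have h2 := h.tendsto_atTop_zero.norm
    simp only [norm_mul, norm_pow, Complex.norm_real, Real.norm_of_nonneg hr2.le,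
      norm_zero] at h2
    exact h2
  obtain ⟨C, hC⟩ := ht.bddAbove_range
  have hC' : ∀ m, ‖g m‖ * (r/2)^m ≤ C := fun m => hC (Set.mem_range_self m)
  apply Summable.of_nonneg_of_le (fun m => norm_nonneg _) (f := fun m => C * (1/2)^m)
  · intro m
    rw [norm_mul, norm_pow]
    have key : ‖g m‖ * ‖w‖^m ≤ (‖g m‖ * (r/2)^m) * (1/2)^m := by
      have h1 : ‖w‖^m ≤ (r/4)^m := pow_le_pow_left₀ (norm_nonneg w) hw m
      have h2 : (r/4 : ℝ)^m = (r/2)^m * (1/2)^m := by rw [← mul_pow]; ring_nf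
      calc ‖g m‖ * ‖w‖^m ≤ ‖g m‖ * (r/4)^m := mul_le_mul_of_nonneg_left h1 (norm_nonneg _)
        _ = (‖g m‖ * (r/2)^m) * (1/2)^m := by rw [h2]; ring
    refine key.trans ?_
    have h3 : (0:ℝ) ≤ (1/2:ℝ)^m := by positivity
    exact mul_le_mul_of_nonneg_right (hC' m) h3
  · exact (summable_geometric_of_lt_one (by norm_num) (by norm_num)).mul_left C

private lemma rho_parity {q : ℝ} {ρ : ℕ → ℂ → ℂ} (hρ : IsRho q ρ) (n : ℕ) (x : ℂ) :
    ρ n (-x) = (-1)^n * ρ n x := by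
  rcases Nat.eq_zero_or_pos n with hn | hn
  · subst hn; rw [hρ.1, hρ.1]; ring
  obtain ⟨z, hz⟩ := Complex.exists_root (f := Polynomial.C 1 * Polynomial.X^2
      + Polynomial.C (-(2*x)) * Polynomial.X + Polynomial.C 1)
      (by rw [Polynomial.degree_quadratic one_ne_zero]; norm_num)
  have hz' : z^2 - 2*x*z + 1 = 0 := by
    simp only [Polynomial.IsRoot, Polynomial.eval_add, Polynomial.eval_mul, Polynomial.eval_pow,
      Polynomial.eval_C, Polynomial.eval_X] at hz
    linear_combination hz
  have hz0 : z ≠ 0 := by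
    intro h0; rw [h0] at hz'; simp at hz'
  have hinv : z⁻¹ = 2*x - z := by
    field_simp
    linear_combination hz'
  have hxz : (z + z⁻¹)/2 = x := by rw [hinv]; ring
  have hx2 : ((-z) + (-z)⁻¹)/2 = -x := by rw [inv_neg, hinv]; ring
  have h1 := (hρ.2 n hn).2 z hz0
  have h2 := (hρ.2 n hn).2 (-z) (neg_ne_zero.2 hz0)
  rw [hxz] at h1
  rw [hx2] at h2
  have hzpow : (-z) ^ (-(n:ℤ)) = (-1)^n * z ^ (-(n:ℤ)) := by
    rw [show -z = (-1) * z by ring, mul_zpow]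
    congr 1
    rw [zpow_neg, zpow_natCast]
    refine inv_eq_of_mul_eq_one_left ?_
    rw [← mul_pow]; norm_num
  rw [h2, h1, neg_sq, hzpow]
  ring

private lemma Eqf_parity {q : ℝ} {ρ : ℕ → ℂ → ℂ} (hρ : IsRho q ρ) (x w : ℂ) :
    Eqf q ρ (-x) w = Eqf q ρ x (-w) := by
  unfold Eqf
  apply tsum_congr
  intro n
  rw [rho_parity hρ n x, neg_pow]
  ring

private lemma const_of_deg0 {B : ℂ → ℂ}
    (h : ∃ P : Polynomial ℂ, P.natDegree = 0 ∧ ∀ x : ℂ, B x = P.eval x) (x y : ℂ) :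
    B x = B y := by
  obtain ⟨P, hP, hE⟩ := h
  obtain ⟨c, rfl⟩ := Polynomial.natDegree_eq_zero.1 hP
  simp [hE]

/-- Reflection formulas: `𝓑_n(−x;q) = (−1)^n 𝓑_n(x;q)` and
`β_n(−x;q) = (−1)^n Σ_k [(−1;q^{1/2})_k/(q^{1/2};q^{1/2})_k]·β_{n−k}(x;q)`. -/
theorem qBernoulli_reflection (q : ℝ) (hq0 : 0 < q) (hq1 : q < 1)
    (ρ : ℕ → ℂ → ℂ) (hρ : IsRho q ρ)
    (B β : ℕ → ℂ → ℂ) (hB : IsBigB q ρ B) (hβ : IsSmallB q ρ β) :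
    ∀ (n : ℕ) (x : ℂ),
      B n (-x) = (-1) ^ n * B n x ∧
      β n (-x) = (-1) ^ n *
        ∑ k ∈ Finset.range (n + 1),
          (qp (qpow q (1/2)) (-1) k / qp (qpow q (1/2)) (qpow q (1/2)) k) * β (n - k) x := by
  intro n x
  set pr : ℝ := q ^ (1/2 : ℝ) with hprs
  have hp0 : 0 < pr := Real.rpow_pos_of_pos hq0 _
  have hp1 : pr < 1 := Real.rpow_lt_one hq0.le hq1 (by norm_num)
  have hqp : qpow q (1/2) = (pr : ℂ) := rfl
  constructor
  · -- B part
    obtain ⟨r₁, hr₁, _, h₁⟩ := hB.2 (-x)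
    obtain ⟨r₂, hr₂, _, h₂⟩ := hB.2 x
    set ε := min (min r₁ r₂) ((1-pr)/2) with hε
    have hε0 : 0 < ε := lt_min (lt_min hr₁ hr₂) (by linarith)
    have key : ∀ w : ℂ, ‖w‖ < ε → HasSum (fun m => (B m (-x) - (-1)^m * B m x) * w ^ m) 0 := by
      intro w hw
      rcases eq_or_ne w 0 with rfl | hw0
      · have hc : B 0 (-x) = B 0 x := const_of_deg0 (hB.1 0) (-x) x
        have hs := hasSum_single (f := fun m => (B m (-x) - (-1)^m * B m x) * (0:ℂ)^m) 0
          (fun m hm => by simp [zero_pow hm])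
        simpa [hc] using hs
      · obtain ⟨S₁, hS₁, hRel₁⟩ := h₁ w
          (hw.trans_le ((min_le_left _ _).trans (min_le_left _ _)))
        obtain ⟨S₂, hS₂, hRel₂⟩ := h₂ (-w)
          (by rw [norm_neg]; exact hw.trans_le ((min_le_left _ _).trans (min_le_right _ _)))
        have hwp : ‖w‖ < (1-pr)/2 := hw.trans_le (min_le_right _ _)
        rw [neg_neg, neg_sq, ← Eqf_parity hρ x w] at hRel₂
        rw [hqp] at hRel₁ hRel₂
        have hF := F_ne_zero pr hp0 hp1 w hw0 hwp
        have hSe : S₁ = S₂ := by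
          have h9 : (S₁ - S₂) * (qpInf (pr:ℂ) (-w) - qpInf (pr:ℂ) w) = 0 := by
            linear_combination hRel₁ + hRel₂
          rcases mul_eq_zero.1 h9 with h | h
          · exact sub_eq_zero.1 h
          · exact absurd h hF
        have hS₂' : HasSum (fun m => ((-1)^m * B m x) * w ^ m) S₂ := by
          have heq : (fun m => B m x * (-w) ^ m) = fun m => ((-1)^m * B m x) * w ^ m := by
            funext m; rw [neg_pow]; ring
          rwa [heq] at hS₂
        have h10 := hS₁.sub hS₂'
        rw [hSe, sub_self] at h10
        have heq2 : (fun m => B m (-x) * w^m - ((-1)^m * B m x) * w^m)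
            = fun m => (B m (-x) - (-1)^m * B m x) * w ^ m := by
          funext m; ring
        rwa [heq2] at h10
    exact sub_eq_zero.1 (coeffs_eq_zero hε0 key n)
  · -- β part
    obtain ⟨r₁, hr₁, _, h₁⟩ := hβ.2 (-x)
    obtain ⟨r₂, hr₂, _, h₂⟩ := hβ.2 x
    set ε := min (min r₁ (r₂/4)) ((1-pr)/2) with hε
    have hε0 : 0 < ε := lt_min (lt_min hr₁ (by linarith)) (by linarith)
    have hs2 : Summable (fun m => β m x * ((r₂/2 : ℝ):ℂ)^m) := by
      obtain ⟨S, hS, _⟩ := h₂ ((r₂/2 : ℝ):ℂ)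
        (by rw [Complex.norm_real, Real.norm_of_nonneg (by linarith)]; linarith)
      exact hS.summable
    have key : ∀ w : ℂ, ‖w‖ < ε → HasSum (fun m => (β m (-x)
        - (-1)^m * ∑ k ∈ Finset.range (m+1),
          (qp ((pr:ℂ)) (-1) k / qp ((pr:ℂ)) ((pr:ℂ)) k) * β (m-k) x) * w ^ m) 0 := by
      have hcq : (fun k => qp ((pr:ℂ)) (-1) k / qp ((pr:ℂ)) ((pr:ℂ)) k) = cq pr := rfl
      intro w hw
      rcases eq_or_ne w 0 with rfl | hw0
      · have hc : β 0 (-x) = β 0 x := const_of_deg0 (hβ.1 0) (-x) x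
        have hs := hasSum_single (f := fun m => (β m (-x)
            - (-1)^m * ∑ k ∈ Finset.range (m+1),
              (qp ((pr:ℂ)) (-1) k / qp ((pr:ℂ)) ((pr:ℂ)) k) * β (m-k) x) * (0:ℂ)^m) 0
          (fun m hm => by simp [zero_pow hm])
        simpa [hc, qp] using hs
      · have hwp : ‖w‖ < (1-pr)/2 := hw.trans_le (min_le_right _ _)
        have hwr1 : ‖w‖ < r₁ := hw.trans_le ((min_le_left _ _).trans (min_le_left _ _))
        have hwr24 : ‖w‖ ≤ r₂/4 :=
          (hw.trans_le ((min_le_left _ _).trans (min_le_right _ _))).le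
        obtain ⟨S₁, hS₁, hRel₁⟩ := h₁ w hwr1
        obtain ⟨S₂, hS₂, hRel₂⟩ := h₂ (-w) (by rw [norm_neg]; linarith)
        rw [neg_neg, ← Eqf_parity hρ x w] at hRel₂
        rw [hqp] at hRel₁ hRel₂
        have hn2 : Summable (fun m => ‖β m x * (-w)^m‖) :=
          summable_norm_of_hasSum hr₂ hs2 (by rw [norm_neg]; exact hwr24)
        have hnc : Summable (fun k => ‖cq pr k * (-w)^k‖) :=
          cq_summable pr hp0 hp1 (-w) (by rw [norm_neg]; exact w_le_half hp0 hp1 hwp)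
        have hCau := hasSum_sum_range_mul_of_summable_norm hnc hn2
        rw [hS₂.tsum_eq] at hCau
        have hCw : (∑' k, cq pr k * (-w)^k) = Cq pr (-w) := rfl
        rw [hCw] at hCau
        have hterm : (fun m => ∑ k ∈ Finset.range (m+1),
              (cq pr k * (-w)^k) * (β (m-k) x * (-w)^(m-k)))
            = fun m => ((-1)^m * ∑ k ∈ Finset.range (m+1), cq pr k * β (m-k) x) * w^m := by
          funext m
          calc ∑ k ∈ Finset.range (m+1), (cq pr k * (-w)^k) * (β (m-k) x * (-w)^(m-k))
              = ∑ k ∈ Finset.range (m+1), (cq pr k * β (m-k) x) * (-w)^m := by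
                apply Finset.sum_congr rfl
                intro k hk
                have hk' : k ≤ m := Finset.mem_range_succ_iff.1 hk
                rw [show (-w)^m = (-w)^k * (-w)^(m-k) by
                  rw [← pow_add, Nat.add_sub_cancel' hk']]
                ring
            _ = (∑ k ∈ Finset.range (m+1), cq pr k * β (m-k) x) * (-w)^m := by
                rw [Finset.sum_mul]
            _ = ((-1)^m * ∑ k ∈ Finset.range (m+1), cq pr k * β (m-k) x) * w^m := by
                rw [neg_pow]; ring
        rw [hterm] at hCau
        have hqb := qbinom pr hp0 hp1 (-w) (by rw [norm_neg]; exact hwp)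
        rw [neg_neg] at hqb
        have hF := F_ne_zero pr hp0 hp1 w hw0 hwp
        have hSe : S₁ = Cq pr (-w) * S₂ := by
          have h9 : (S₁ - Cq pr (-w) * S₂) * (qpInf (pr:ℂ) (-w) - qpInf (pr:ℂ) w) = 0 := by
            linear_combination hRel₁ + Cq pr (-w) * hRel₂ - (w * Eqf q ρ (-x) w) * hqb
          rcases mul_eq_zero.1 h9 with h | h
          · exact sub_eq_zero.1 h
          · exact absurd h hF
        rw [← hSe] at hCau
        have h10 := hS₁.sub hCau
        rw [sub_self] at h10
        have heq2 : (fun m => β m (-x) * w^m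
              - ((-1)^m * ∑ k ∈ Finset.range (m+1), cq pr k * β (m-k) x) * w^m)
            = fun m => (β m (-x) - (-1)^m * ∑ k ∈ Finset.range (m+1),
              (qp ((pr:ℂ)) (-1) k / qp ((pr:ℂ)) ((pr:ℂ)) k) * β (m-k) x) * w ^ m := by
          funext m
          have hck : ∀ k, qp ((pr:ℂ)) (-1) k / qp ((pr:ℂ)) ((pr:ℂ)) k = cq pr k := fun k => rfl
          simp only [hck]
          ring
        rwa [heq2] at h10
    have hfinal := sub_eq_zero.1 (coeffs_eq_zero hε0 key n)
    rw [hqp]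
    exact hfinal


end
end

section
/- Let p>0, p≠1, and let δ, T, D_p be as in the context, with a sequence of polynomials (φ_n) satisfying the stated conditions. Then every complex polynomial f of degree at most n has the expansion f = f(0) + Σ_{k=1}^{n} c_k·φ_k, where c_k = [(T(D_p^{k−1} f))(0) − (D_p^{k−1} f)(0)]/[k]_p!. -/
open Polynomial

noncomputable section

/-- the p-number `[n]_p = (1-p^n)/(1-p)` -/
def pnum (p : ℝ) (n : ℕ) : ℂ := (1 - (p : ℂ) ^ n) / (1 - (p : ℂ))

/-- the p-factorial `[n]_p!` -/
def pfact (p : ℝ) (n : ℕ) : ℂ := ∏ j ∈ Finset.range n, pnum p (j + 1)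

/-- the p-binomial coefficient -/
def pbinom (p : ℝ) (n k : ℕ) : ℂ := pfact p n / (pfact p k * pfact p (n - k))

/-- `D` is the p-difference operator, the linear operator with `D X^n = [n]_p X^{n-1}` -/
def IsDp (p : ℝ) (D : Module.End ℂ (Polynomial ℂ)) : Prop :=
  ∀ n : ℕ, D (X ^ n) = Polynomial.C (pnum p n) * X ^ (n - 1)

/-- `T` is the linear operator with `T X^n = Σ_{k≤n} C_p(n,k) δ_k X^{n-k}` -/
def IsTp (p : ℝ) (δ : ℕ → ℂ) (T : Module.End ℂ (Polynomial ℂ)) : Prop :=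
  ∀ n : ℕ, T (X ^ n) =
    ∑ k ∈ Finset.range (n + 1), Polynomial.C (pbinom p n k * δ k) * X ^ (n - k)

/-- `φ` is a sequence of polynomials with `deg φ_n = n`, `φ_0 = 1`, `φ_n(0) = 0` and
`Tφ_n − φ_n = [n]_p X^{n-1}` for `n ≥ 1` -/
def IsPhi (p : ℝ) (T : Module.End ℂ (Polynomial ℂ)) (φ : ℕ → Polynomial ℂ) : Prop :=
  φ 0 = 1 ∧
  (∀ n : ℕ, 1 ≤ n → (φ n).natDegree = n ∧ (φ n).eval 0 = 0) ∧
  ∀ n : ℕ, 1 ≤ n → T (φ n) - φ n = Polynomial.C (pnum p n) * X ^ (n - 1)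

section Aux
variable {p : ℝ} (hp0 : 0 < p) (hp1 : p ≠ 1)

include hp0 hp1 in
lemma pnum_ne_zero {n : ℕ} (hn : 1 ≤ n) : pnum p n ≠ 0 := by
  obtain ⟨m, rfl⟩ := Nat.exists_eq_add_of_le hn
  unfold pnum
  have h1 : (1 : ℂ) - (p:ℂ) ≠ 0 := by
    intro h
    exact hp1 (by exact_mod_cast (by linear_combination -h : (p:ℂ) = 1))
  have h2 : (1 : ℂ) - (p:ℂ)^(1+m) ≠ 0 := by
    intro h
    have hpc : (p:ℂ)^(1+m) = 1 := by linear_combination -h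
    have hr : (p:ℝ)^(1+m) = 1 := by exact_mod_cast hpc
    exact hp1 ((pow_eq_one_iff_of_nonneg hp0.le (by omega)).mp hr)
  exact div_ne_zero h2 h1

include hp1 in
lemma pnum_one' : pnum p 1 = 1 := by
  have h1 : (1 : ℂ) - (p:ℂ) ≠ 0 := by
    intro h
    exact hp1 (by exact_mod_cast (by linear_combination -h : (p:ℂ) = 1))
  simp [pnum, div_self h1]

lemma pnum_zero : pnum p 0 = 0 := by simp [pnum]

lemma pfact_succ (n : ℕ) : pfact p (n+1) = pfact p n * pnum p (n+1) :=
  Finset.prod_range_succ _ _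

lemma pfact_zero : pfact p 0 = 1 := rfl

include hp1 in
lemma pfact_one : pfact p 1 = 1 := by
  simp [pfact, pnum_one' hp1]

include hp0 hp1 in
lemma pfact_ne_zero (n : ℕ) : pfact p n ≠ 0 :=
  Finset.prod_ne_zero_iff.mpr fun j _ => pnum_ne_zero hp0 hp1 (Nat.le_add_left 1 j)

include hp0 hp1 in
lemma pbinom_zero (n : ℕ) : pbinom p n 0 = 1 := by
  simp [pbinom, pfact_zero, div_self (pfact_ne_zero hp0 hp1 n)]

include hp0 hp1 in
lemma pbinom_self (n : ℕ) : pbinom p n n = 1 := by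
  simp [pbinom, pfact_zero, div_self (pfact_ne_zero hp0 hp1 n)]

include hp0 hp1 in
lemma pbinom_one {n : ℕ} (hn : 1 ≤ n) : pbinom p n 1 = pnum p n := by
  obtain ⟨m, rfl⟩ := Nat.exists_eq_add_of_le hn
  rw [pbinom, pfact_one hp1, one_mul]
  have : 1 + m - 1 = m := by omega
  rw [this, (by ring_nf : 1 + m = m + 1), pfact_succ]
  rw [mul_comm, mul_div_assoc, div_self (pfact_ne_zero hp0 hp1 m), mul_one]


end Aux

section AuxB
variable {p : ℝ} (hp0 : 0 < p) (hp1 : p ≠ 1)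
  {δ : ℕ → ℂ} (hδ0 : δ 0 = 1)
  {D T : Module.End ℂ (Polynomial ℂ)} (hD : IsDp p D) (hT : IsTp p δ T)

-- pfact_one pfact_ne_zero pbinom_zero pbinom_self pbinom_one


include hδ0 hp0 hp1 hT in
lemma T_one : T 1 = 1 := by
  have := hT 0
  simp [hδ0, pbinom_zero hp0 hp1 0] at this
  simpa using this

include hδ0 hp0 hp1 hT in
lemma T_C (a : ℂ) : T (C a) = C a := by
  have : (C a : ℂ[X]) = a • (1 : ℂ[X]) := by simp [smul_eq_C_mul]
  rw [this, map_smul, T_one hp0 hp1 hδ0 hT, smul_eq_C_mul, mul_one]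

include hD in
lemma D_C (a : ℂ) : D (C a) = 0 := by
  have : (C a : ℂ[X]) = a • (X ^ 0 : ℂ[X]) := by simp [smul_eq_C_mul]
  rw [this, map_smul, hD 0]
  simp [pnum_zero]

include hT in
include hp0 hp1 hδ0 in
lemma U_Xpow (i : ℕ) : T (X ^ i) - X ^ i
    = ∑ k ∈ Finset.range i, C (pbinom p i (k+1) * δ (k+1)) * X ^ (i-(k+1)) := by
  have h := hT i
  rw [Finset.sum_range_succ'] at h
  simp only [Nat.sub_zero, hδ0, pbinom_zero hp0 hp1 i, one_mul, mul_one, map_one] at h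
  rw [h]
  ring

end AuxB

noncomputable section
variable {p : ℝ} (hp0 : 0 < p) (hp1 : p ≠ 1)
  {δ : ℕ → ℂ} (hδ0 : δ 0 = 1)
  {D T : Module.End ℂ (Polynomial ℂ)} (hD : IsDp p D) (hT : IsTp p δ T)

include hp0 hp1 hδ0 hT in
lemma U_Xpow_natDegree (i : ℕ) : (T (X ^ i) - X ^ i).natDegree ≤ i - 1 := by
  rw [U_Xpow hp0 hp1 hδ0 hT]
  apply Polynomial.natDegree_sum_le_of_forall_le
  intro k hk
  refine le_trans (natDegree_C_mul_le _ _) ?_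
  simp only [natDegree_X_pow]
  omega

include hp0 hp1 hδ0 hT in
lemma U_Xpow_coeff {i : ℕ} (hi : 1 ≤ i) :
    (T (X ^ i) - X ^ i).coeff (i - 1) = pnum p i * δ 1 := by
  rw [U_Xpow hp0 hp1 hδ0 hT, finset_sum_coeff]
  simp only [coeff_C_mul, coeff_X_pow]
  rw [Finset.sum_eq_single 0]
  · rw [if_pos (show i - 1 = i - (0+1) from rfl), pbinom_one hp0 hp1 hi, mul_one]
  · intro k hk hk0
    rw [if_neg (show ¬(i - 1 = i - (k+1)) by simp at hk; omega), mul_zero]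
  · intro h
    simp at h
    omega

include hp0 hp1 hδ0 hT in
lemma U_sum (g : ℂ[X]) {m : ℕ} (hg : g.natDegree ≤ m) :
    T g - g = ∑ j ∈ Finset.range (m+1), g.coeff j • (T (X ^ j) - X ^ j) := by
  conv_lhs => rw [g.as_sum_range' (m+1) (by omega)]
  simp only [← C_mul_X_pow_eq_monomial, ← smul_eq_C_mul, map_sum, map_smul]
  rw [← Finset.sum_sub_distrib]
  exact Finset.sum_congr rfl fun j _ => (smul_sub _ _ _).symm

include hp0 hp1 hδ0 hT in
lemma U_natDegree (g : ℂ[X]) {m : ℕ} (hg : g.natDegree ≤ m) :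
    (T g - g).natDegree ≤ m - 1 := by
  rw [U_sum hp0 hp1 hδ0 hT g hg]
  apply Polynomial.natDegree_sum_le_of_forall_le
  intro j hj
  refine le_trans (natDegree_smul_le _ _) (le_trans (U_Xpow_natDegree hp0 hp1 hδ0 hT j) ?_)
  simp at hj
  omega

include hp0 hp1 hδ0 hT in
lemma U_coeff (g : ℂ[X]) {m : ℕ} (hm : 1 ≤ m) (hg : g.natDegree ≤ m) :
    (T g - g).coeff (m-1) = pnum p m * δ 1 * g.coeff m := by
  rw [U_sum hp0 hp1 hδ0 hT g hg, finset_sum_coeff]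
  rw [Finset.sum_eq_single m]
  · rw [coeff_smul, U_Xpow_coeff hp0 hp1 hδ0 hT hm, smul_eq_mul]
    ring
  · intro j hj hjm
    simp only [coeff_smul, smul_eq_mul]
    rcases Nat.eq_zero_or_pos j with rfl | hj1
    · rw [pow_zero, T_one hp0 hp1 hδ0 hT, sub_self]
      simp
    · have : (T (X ^ j) - X ^ j).coeff (m - 1) = 0 :=
        coeff_eq_zero_of_natDegree_lt (lt_of_le_of_lt (U_Xpow_natDegree hp0 hp1 hδ0 hT j)
          (by simp at hj; omega))
      simp [this]
  · intro h
    simp at h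

end
noncomputable section
variable {p : ℝ} (hp0 : 0 < p) (hp1 : p ≠ 1)
  {δ : ℕ → ℂ} (hδ0 : δ 0 = 1)
  {D T : Module.End ℂ (Polynomial ℂ)} (hD : IsDp p D) (hT : IsTp p δ T)
  {φ : ℕ → Polynomial ℂ} (hφ0 : φ 0 = 1)
  (hφd : ∀ n, 1 ≤ n → (φ n).natDegree = n ∧ (φ n).eval 0 = 0)
  (hφT : ∀ n, 1 ≤ n → T (φ n) - φ n = C (pnum p n) * X ^ (n-1))

include hp0 hp1 hδ0 hT hφd hφT in
lemma delta1_ne : δ 1 ≠ 0 := by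
  have h := hφT 1 le_rfl
  have hc := U_coeff hp0 hp1 hδ0 hT (φ 1) le_rfl (le_of_eq (hφd 1 le_rfl).1)
  rw [h] at hc
  simp only [Nat.sub_self, coeff_C_mul, pow_zero, mul_one, coeff_X_pow] at hc
  rw [pnum_one' hp1] at hc
  simp at hc
  intro h0
  rw [h0] at hc
  simp at hc

include hp0 hp1 hδ0 hT hφd hφT in
lemma uniq (g : ℂ[X]) (h1 : T g - g = 0) (h2 : g.eval 0 = 0) : g = 0 := by
  by_contra hg
  rcases Nat.eq_zero_or_pos g.natDegree with hm | hm
  · exact hg (by rw [Polynomial.eq_C_of_natDegree_eq_zero hm] at h2 ⊢; simpa using h2)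
  · have hc := U_coeff hp0 hp1 hδ0 hT g hm le_rfl
    rw [h1, coeff_zero] at hc
    have h3 : g.coeff g.natDegree ≠ 0 := mt Polynomial.leadingCoeff_eq_zero.mp hg
    exact (mul_ne_zero (mul_ne_zero (pnum_ne_zero hp0 hp1 hm)
      (delta1_ne hp0 hp1 hδ0 hT hφd hφT)) h3) hc.symm

include hp0 hp1 in
lemma pbinom_mul {k n : ℕ} (h : k < n) :
    pbinom p n k * pnum p (n-k) = pnum p n * pbinom p (n-1) k := by
  obtain ⟨t, rfl⟩ : ∃ t, n = k + t + 1 := ⟨n - k - 1, by omega⟩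
  have e1 : k + t + 1 - k = t + 1 := by omega
  have e2 : k + t + 1 - 1 = k + t := by omega
  have e3 : k + t - k = t := by omega
  rw [pbinom, pbinom, e1, e2, e3]
  rw [show k + t + 1 = (k + t) + 1 from rfl, pfact_succ, pfact_succ]
  have h1 := pfact_ne_zero hp0 hp1 k
  have h2 := pfact_ne_zero hp0 hp1 t
  have h3 := pnum_ne_zero hp0 hp1 (Nat.le_add_left 1 t)
  field_simp

include hp0 hp1 hδ0 hD hT in
lemma DT_comm (g : ℂ[X]) : D (T g) = T (D g) := by
  induction g using Polynomial.induction_on' with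
  | add q r hq hr => rw [map_add, map_add, hq, hr, map_add, map_add]
  | monomial n a =>
    rw [← C_mul_X_pow_eq_monomial, ← smul_eq_C_mul, map_smul, map_smul, map_smul, map_smul]
    congr 1
    rcases Nat.eq_zero_or_pos n with rfl | hn
    · rw [hD 0, pnum_zero, hT 0, Finset.sum_range_one]
      rw [← smul_eq_C_mul, map_smul, hD 0, pnum_zero]
      simp
    rw [hT n, hD n, map_sum, ← smul_eq_C_mul, map_smul, hT (n-1), Finset.smul_sum,
      Finset.sum_range_succ, Nat.sub_add_cancel hn]
    have hz : D (C (pbinom p n n * δ n) * X ^ (n - n)) = 0 := by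
      rw [Nat.sub_self, ← smul_eq_C_mul, map_smul, hD 0, pnum_zero]
      simp
    rw [hz, add_zero]
    apply Finset.sum_congr rfl
    intro k hk
    simp only [Finset.mem_range] at hk
    rw [← smul_eq_C_mul, map_smul, hD (n-k), smul_eq_C_mul, smul_eq_C_mul,
      ← mul_assoc, ← mul_assoc, ← C_mul, ← C_mul]
    have : n - k - 1 = n - 1 - k := by omega
    rw [this]
    congr 2
    linear_combination δ k * pbinom_mul hp0 hp1 hk
end
noncomputable section
variable {p : ℝ} (hp0 : 0 < p) (hp1 : p ≠ 1)
  {δ : ℕ → ℂ} (hδ0 : δ 0 = 1)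
  {D T : Module.End ℂ (Polynomial ℂ)} (hD : IsDp p D) (hT : IsTp p δ T)
  {φ : ℕ → Polynomial ℂ} (hφ0 : φ 0 = 1)
  (hφd : ∀ n, 1 ≤ n → (φ n).natDegree = n ∧ (φ n).eval 0 = 0)
  (hφT : ∀ n, 1 ≤ n → T (φ n) - φ n = C (pnum p n) * X ^ (n-1))

include hp0 hp1 hδ0 hD hT hφ0 hφd hφT in
lemma Dphi {m : ℕ} (hm : 1 ≤ m) :
    ∃ e : ℂ, D (φ m) = C (pnum p m) * φ (m-1) + C e := by
  set g0 : ℂ[X] := D (φ m) - C (pnum p m) * φ (m-1) with hg0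
  refine ⟨g0.eval 0, ?_⟩
  have hA : T (D (φ m)) - D (φ m) = C (pnum p m * pnum p (m-1)) * X ^ (m-1-1) := by
    rw [← DT_comm hp0 hp1 hδ0 hD hT, ← map_sub, hφT m hm, ← smul_eq_C_mul, map_smul,
      hD (m-1), smul_eq_C_mul, ← mul_assoc, ← C_mul]
  have hB : T (C (pnum p m) * φ (m-1)) - C (pnum p m) * φ (m-1)
      = C (pnum p m * pnum p (m-1)) * X ^ (m-1-1) := by
    rw [← smul_eq_C_mul, map_smul, ← smul_sub]
    rcases Nat.lt_or_ge m 2 with h2 | h2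
    · have hm1 : m = 1 := by omega
      subst hm1
      rw [hφ0]
      have h10 : T 1 - 1 = (0 : ℂ[X]) := by rw [T_one hp0 hp1 hδ0 hT, sub_self]
      rw [h10, smul_zero, pnum_zero, mul_zero, map_zero, zero_mul]
    · rw [hφT (m-1) (by omega), smul_eq_C_mul, ← mul_assoc, ← C_mul]
  have key : g0 - C (g0.eval 0) = 0 := by
    apply uniq hp0 hp1 hδ0 hT hφd hφT
    · rw [map_sub, T_C hp0 hp1 hδ0 hT, hg0, map_sub]
      linear_combination hA - hB
    · simp
  have h4 := sub_eq_zero.mp key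
  rw [hg0] at h4 ⊢
  linear_combination (norm := ring_nf) h4

include hp0 hp1 hδ0 hD hT hφ0 hφd hφT in
lemma Dpow {t j : ℕ} (h : t ≤ j) :
    ∃ e : ℂ, (D ^ t) (φ j) = C (pfact p j / pfact p (j - t)) * φ (j - t) + C e := by
  induction t with
  | zero =>
    refine ⟨0, ?_⟩
    rw [Nat.sub_zero, div_self (pfact_ne_zero hp0 hp1 j), map_one, one_mul, map_zero, add_zero,
      pow_zero, Module.End.one_apply]
  | succ t ih =>
    obtain ⟨e, he⟩ := ih (by omega)
    obtain ⟨e', he'⟩ := Dphi hp0 hp1 hδ0 hD hT hφ0 hφd hφT (show 1 ≤ j - t by omega)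
    refine ⟨(pfact p j / pfact p (j - t)) * e', ?_⟩
    have hsc : pfact p j / pfact p (j - t) * pnum p (j - t) = pfact p j / pfact p (j - t - 1) := by
      have hs : j - t = (j - t - 1) + 1 := by omega
      rw [hs, pfact_succ, Nat.add_sub_cancel]
      have h1 := pfact_ne_zero hp0 hp1 (j - t - 1)
      have h2 := pnum_ne_zero hp0 hp1 (Nat.le_add_left 1 (j - t - 1))
      field_simp
    have hj : j - (t + 1) = j - t - 1 := by omega
    rw [pow_succ', Module.End.mul_apply, he, map_add, D_C hD, add_zero, ← smul_eq_C_mul,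
      map_smul, he', hj, smul_add, smul_eq_C_mul, smul_eq_C_mul, ← mul_assoc, ← C_mul,
      ← C_mul, hsc]


include hD in
lemma Dpow_C (t : ℕ) (ht : 1 ≤ t) (a : ℂ) : (D ^ t) (C a) = 0 := by
  obtain ⟨s, rfl⟩ := Nat.exists_eq_add_of_le ht
  rw [add_comm, pow_succ, Module.End.mul_apply, D_C hD, map_zero]

include hp0 hp1 hδ0 hD hT hφ0 hφd hφT in
lemma Dpow_const {t j : ℕ} (h : j ≤ t) : ∃ e : ℂ, (D ^ t) (φ j) = C e := by
  obtain ⟨e, he⟩ := Dpow hp0 hp1 hδ0 hD hT hφ0 hφd hφT (le_refl j)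
  rw [Nat.sub_self, hφ0, mul_one, ← C_add] at he
  rcases Nat.eq_or_lt_of_le h with rfl | hlt
  · exact ⟨_, he⟩
  · refine ⟨0, ?_⟩
    obtain ⟨s, rfl⟩ : ∃ s, t = j + (s + 1) := ⟨t - j - 1, by omega⟩
    rw [show j + (s+1) = (s+1) + j by omega, pow_add, Module.End.mul_apply, he,
      Dpow_C hD (s+1) (by omega), map_zero]

include hp0 hp1 hδ0 hT in
lemma S_C (a : ℂ) : (T (C a)).eval 0 - (C a).eval 0 = 0 := by
  rw [T_C hp0 hp1 hδ0 hT, sub_self]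

include hp1 hφT in
lemma S_phi {j : ℕ} (hj : 1 ≤ j) :
    (T (φ j)).eval 0 - (φ j).eval 0 = if j = 1 then 1 else 0 := by
  have h := congrArg (Polynomial.eval 0) (hφT j hj)
  rw [eval_sub, eval_mul, eval_C, eval_pow, eval_X] at h
  rw [h]
  rcases eq_or_ne j 1 with rfl | hj1
  · simp [pnum_one' hp1]
  · rw [if_neg hj1, zero_pow (by omega), mul_zero]

include hp0 hp1 hδ0 hD hT hφ0 hφd hφT in
lemma Skey {k : ℕ} (hk : 1 ≤ k) (j : ℕ) :
    (T ((D ^ (k-1)) (φ j))).eval 0 - ((D ^ (k-1)) (φ j)).eval 0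
      = if j = k then pfact p k else 0 := by
  rcases Nat.lt_or_ge j k with hjk | hjk
  · -- j ≤ k-1 : constant
    obtain ⟨e, he⟩ := Dpow_const hp0 hp1 hδ0 hD hT hφ0 hφd hφT (show j ≤ k - 1 by omega)
    rw [he, S_C hp0 hp1 hδ0 hT, if_neg (by omega)]
  · -- j ≥ k
    obtain ⟨e, he⟩ := Dpow hp0 hp1 hδ0 hD hT hφ0 hφd hφT (show k - 1 ≤ j by omega)
    rw [he, map_add, T_C hp0 hp1 hδ0 hT, ← smul_eq_C_mul, map_smul]
    simp only [eval_add, eval_smul, eval_C, smul_eq_mul]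
    have hS := S_phi hp1 hφT (show 1 ≤ j - (k-1) by omega)
    rcases eq_or_ne j k with rfl | hne
    · rw [if_pos rfl] at *
      rw [Nat.sub_sub_self (by omega : 1 ≤ j)] at hS ⊢
      have : pfact p 1 = 1 := by simp [pfact, pnum_one' hp1]
      rw [this, div_one]
      rw [if_pos rfl] at hS
      linear_combination pfact p j * hS
    · rw [if_neg hne]
      rw [if_neg (by omega)] at hS
      linear_combination (pfact p j / pfact p (j - (k-1))) * hS

include hp0 hp1 hφ0 hφd in
lemma span_phi (m : ℕ) : ∀ f : ℂ[X], f.natDegree ≤ m →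
    ∃ b : ℕ → ℂ, f = ∑ k ∈ Finset.range (m+1), C (b k) * φ k := by
  induction m with
  | zero =>
    intro f hf
    refine ⟨fun _ => f.coeff 0, ?_⟩
    rw [Finset.sum_range_one, hφ0, mul_one]
    exact f.eq_C_of_natDegree_le_zero hf
  | succ m ih =>
    intro f hf
    have hd := (hφd (m+1) (by omega)).1
    have hφne : φ (m+1) ≠ 0 := fun h => by simp [h] at hd
    have hlc : (φ (m+1)).coeff (m+1) ≠ 0 := by
      have hne := mt Polynomial.leadingCoeff_eq_zero.mp hφne
      rwa [Polynomial.leadingCoeff, hd] at hne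
    set a := f.coeff (m+1) / (φ (m+1)).coeff (m+1) with ha
    set g := f - C a * φ (m+1) with hg
    have hgc : g.coeff (m+1) = 0 := by
      rw [hg, coeff_sub, coeff_C_mul, ha, div_mul_cancel₀ _ hlc, sub_self]
    have hgd : g.natDegree ≤ m := by
      have h1 : g.natDegree ≤ m+1 := le_trans (natDegree_sub_le _ _)
        (max_le hf (le_trans (natDegree_C_mul_le _ _) (le_of_eq hd)))
      rcases eq_or_ne g 0 with h0 | h0
      · simp [h0]
      by_contra hc
      push_neg at hc
      have he : g.natDegree = m+1 := by omega
      exact h0 (Polynomial.leadingCoeff_eq_zero.mp (by rw [leadingCoeff, he]; exact hgc))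
    obtain ⟨b, hb⟩ := ih g hgd
    refine ⟨Function.update b (m+1) a, ?_⟩
    rw [Finset.sum_range_succ, Function.update_self]
    have hsc : ∑ k ∈ Finset.range (m+1), C (Function.update b (m+1) a k) * φ k
        = ∑ k ∈ Finset.range (m+1), C (b k) * φ k :=
      Finset.sum_congr rfl fun k hk => by
        rw [Function.update_of_ne (by simp at hk; omega)]
    rw [hsc, ← hb, hg]
    ring

include hp0 hp1 hδ0 hD hT hφ0 hφd hφT in
theorem main_expansion (f : ℂ[X]) (n : ℕ) (hf : f.natDegree ≤ n) :
    f = C (f.eval 0) +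
      ∑ k ∈ Finset.Icc 1 n,
        C (((T ((D ^ (k - 1)) f)).eval 0 - ((D ^ (k - 1)) f).eval 0) / pfact p k) * φ k := by
  obtain ⟨b, hb⟩ := span_phi hp0 hp1 hφ0 hφd n f hf
  have hb0 : f.eval 0 = b 0 := by
    rw [hb, eval_finset_sum]
    rw [Finset.sum_eq_single 0]
    · rw [eval_mul, eval_C, hφ0, eval_one, mul_one]
    · intro j hj hj0
      rw [eval_mul, (hφd j (by omega)).2, mul_zero]
    · intro h
      simp at h
  have hDf : ∀ k : ℕ, (D ^ (k-1)) f = ∑ j ∈ Finset.range (n+1), b j • ((D ^ (k-1)) (φ j)) := by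
    intro k
    rw [hb, map_sum]
    exact Finset.sum_congr rfl fun j _ => by rw [← smul_eq_C_mul, map_smul]
  have hck : ∀ k ∈ Finset.Icc 1 n,
      ((T ((D ^ (k-1)) f)).eval 0 - ((D ^ (k-1)) f).eval 0) / pfact p k = b k := by
    intro k hk
    simp only [Finset.mem_Icc] at hk
    have hS : (T ((D ^ (k-1)) f)).eval 0 - ((D ^ (k-1)) f).eval 0 = b k * pfact p k := by
      rw [hDf k, map_sum, eval_finset_sum, eval_finset_sum, ← Finset.sum_sub_distrib]
      have : ∀ j ∈ Finset.range (n+1),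
          (T (b j • (D ^ (k-1)) (φ j))).eval 0 - (b j • (D ^ (k-1)) (φ j)).eval 0
          = b j * (if j = k then pfact p k else 0) := by
        intro j _
        rw [map_smul, eval_smul, eval_smul, smul_eq_mul, smul_eq_mul, ← mul_sub,
          Skey hp0 hp1 hδ0 hD hT hφ0 hφd hφT hk.1 j]
      rw [Finset.sum_congr rfl this]
      simp only [mul_ite, mul_zero]
      rw [Finset.sum_ite_eq' (Finset.range (n+1)) k fun j => b j * pfact p k]
      rw [if_pos (by simp; omega)]
    rw [hS, mul_div_cancel_right₀ _ (pfact_ne_zero hp0 hp1 k)]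
  rw [Finset.sum_congr rfl fun k hk => by rw [hck k hk], hb0]
  have hins : Finset.range (n+1) = insert 0 (Finset.Icc 1 n) := by
    ext x
    simp only [Finset.mem_range, Finset.mem_insert, Finset.mem_Icc]
    omega
  rw [hb, hins, Finset.sum_insert (by simp), hφ0, mul_one]


/-- Every polynomial `f` of degree at most `n` expands as
`f = f(0) + Σ_{k=1}^n c_k φ_k` with `c_k = [(T D_p^{k-1} f)(0) − (D_p^{k-1} f)(0)]/[k]_p!`. -/
theorem phi_expansion_of_polynomials (p : ℝ) (hp0 : 0 < p) (hp1 : p ≠ 1)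
    (δ : ℕ → ℂ) (hδ0 : δ 0 = 1)
    (D : Module.End ℂ (Polynomial ℂ)) (hD : IsDp p D)
    (T : Module.End ℂ (Polynomial ℂ)) (hT : IsTp p δ T)
    (φ : ℕ → Polynomial ℂ) (hφ : IsPhi p T φ)
    (f : Polynomial ℂ) (n : ℕ) (hf : f.natDegree ≤ n) :
    f = Polynomial.C (f.eval 0) +
      ∑ k ∈ Finset.Icc 1 n,
        Polynomial.C (((T ((D ^ (k - 1)) f)).eval 0 - ((D ^ (k - 1)) f).eval 0) / pfact p k) *
          φ k := by
  obtain ⟨hφ0, hφd, hφT⟩ := hφ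
  exact main_expansion hp0 hp1 hδ0 hD hT hφ0 hφd hφT f n hf

end
end
end

section
/- Let p>0, p≠1, and let δ, T, D_p be as in the context. Then the p-difference operator commutes with T on polynomials: for every complex polynomial f, D_p(T f) = T(D_p f). -/
open Polynomial

noncomputable section

lemma pnum_ne (p : ℝ) (hp0 : 0 < p) (hp1 : p ≠ 1) {m : ℕ} (hm : 1 ≤ m) :
    pnum p m ≠ 0 := by
  unfold pnum
  apply div_ne_zero
  · intro h
    have h1 : (p : ℂ) ^ m = 1 := by linear_combination -h
    have h2 : (p : ℝ) ^ m = 1 := by exact_mod_cast h1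
    rcases lt_or_gt_of_ne hp1 with h | h
    · have := pow_lt_one₀ (le_of_lt hp0) h (by omega : m ≠ 0); linarith
    · have := one_lt_pow₀ h (by omega : m ≠ 0); linarith
  · intro h
    have h1 : (p : ℂ) = 1 := by linear_combination -h
    exact hp1 (by exact_mod_cast h1)

lemma pfact_ne (p : ℝ) (hp0 : 0 < p) (hp1 : p ≠ 1) (m : ℕ) : pfact p m ≠ 0 := by
  unfold pfact
  exact Finset.prod_ne_zero_iff.mpr fun j _ => pnum_ne p hp0 hp1 (by omega)

lemma pbinom_key (p : ℝ) (hp0 : 0 < p) (hp1 : p ≠ 1) {n k : ℕ} (hk : k < n) :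
    pbinom p n k * pnum p (n - k) = pnum p n * pbinom p (n - 1) k := by
  unfold pbinom
  have h1 : pfact p n = pfact p (n - 1) * pnum p n := by
    unfold pfact
    rw [show n = (n - 1) + 1 by omega, Finset.prod_range_succ]
    congr 2 <;> omega
  have h2 : pfact p (n - k) = pfact p (n - k - 1) * pnum p (n - k) := by
    unfold pfact
    rw [show n - k = (n - k - 1) + 1 by omega, Finset.prod_range_succ]
    congr 2 <;> omega
  have h3 : n - 1 - k = n - k - 1 := by omega
  rw [h1, h2, h3]
  have hnk : pnum p (n - k) ≠ 0 := pnum_ne p hp0 hp1 (by omega)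
  have hfk := pfact_ne p hp0 hp1 k
  have hfnk := pfact_ne p hp0 hp1 (n - k - 1)
  field_simp

/-- The p-difference operator commutes with `T` on polynomials. -/
theorem Dp_commutes_with_T (p : ℝ) (hp0 : 0 < p) (hp1 : p ≠ 1)
    (δ : ℕ → ℂ) (hδ0 : δ 0 = 1)
    (D : Module.End ℂ (Polynomial ℂ)) (hD : IsDp p D)
    (T : Module.End ℂ (Polynomial ℂ)) (hT : IsTp p δ T) :
    ∀ f : Polynomial ℂ, D (T f) = T (D f) := by
  have hkey : ∀ n : ℕ, D (T (X ^ n)) = T (D (X ^ n)) := by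
    intro n
    rcases Nat.eq_zero_or_pos n with rfl | hn
    · have hT0 : T (X ^ 0) = X ^ 0 := by
        rw [hT]
        simp [pbinom, pfact, hδ0]
      have hD0 : D ((X : Polynomial ℂ) ^ 0) = 0 := by
        rw [hD]; simp [pnum]
      rw [hT0, hD0, map_zero]
    · rw [hT n, hD n, map_sum]
      rw [show Polynomial.C (pnum p n) * X ^ (n - 1) = pnum p n • (X : Polynomial ℂ) ^ (n - 1)
          from (Polynomial.smul_eq_C_mul _).symm]
      rw [map_smul, hT (n - 1), Finset.smul_sum]
      rw [show n - 1 + 1 = n by omega]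
      rw [Finset.sum_range_succ]
      have hlast : D (Polynomial.C (pbinom p n n * δ n) * X ^ (n - n)) = 0 := by
        rw [← Polynomial.smul_eq_C_mul, map_smul, hD]
        simp [pnum]
      rw [hlast, add_zero]
      apply Finset.sum_congr rfl
      intro k hk
      have hk' : k < n := Finset.mem_range.mp hk
      rw [← Polynomial.smul_eq_C_mul, map_smul, hD]
      rw [Polynomial.smul_eq_C_mul, Polynomial.smul_eq_C_mul]
      rw [show n - k - 1 = n - 1 - k by omega]
      rw [← mul_assoc, ← mul_assoc, ← Polynomial.C_mul, ← Polynomial.C_mul]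
      congr 2
      have := pbinom_key p hp0 hp1 hk'
      calc pbinom p n k * δ k * pnum p (n - k)
          = pbinom p n k * pnum p (n - k) * δ k := by ring
        _ = pnum p n * pbinom p (n - 1) k * δ k := by rw [this]
        _ = pnum p n * (pbinom p (n - 1) k * δ k) := by ring
  intro f
  induction f using Polynomial.induction_on' with
  | add f g hf hg => simp [map_add, hf, hg]
  | monomial m a =>
      rw [← Polynomial.C_mul_X_pow_eq_monomial, ← Polynomial.smul_eq_C_mul]
      simp only [map_smul, hkey]


end
end
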